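/- arXiv:2308.06040 — 4 statements merged into one kernel-verified Lean document; each statement's English description precedes it below -/
import Mathlib

section
/- Let X be a finite simple graph on n vertices and let m ≥ 2. Then the Laplacian spectrum (as a multiset) of the Kronecker product X × K_m equals the union of the spectrum of the matrix (m−1)·𝔏(X), each eigenvalue taken with its multiplicity, and the spectrum of the matrix A(X) + (m−1)·D(X), each eigenvalue taken with m−1 times its multiplicity. -/
open scoped Classical

noncomputable section

namespace ArxivPaper

/-- The Kronecker (tensor) product of two simple graphs. -/
def tensorProd {α β : Type*} (G : SimpleGraph α) (H : SimpleGraph β) : SimpleGraph (α × β) where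
  Adj p q := G.Adj p.1 q.1 ∧ H.Adj p.2 q.2
  symm := ⟨fun p q h => ⟨G.adj_symm h.1, H.adj_symm h.2⟩⟩
  loopless := ⟨fun p h => G.irrefl h.1⟩

/-- The multiset of eigenvalues of a real matrix (roots of its characteristic polynomial,
with algebraic multiplicity). -/
def spec {n : Type*} [Fintype n] [DecidableEq n] (M : Matrix n n ℝ) : Multiset ℝ :=
  M.charpoly.roots

/-- Eigenvalues sorted in nondecreasing order. -/
def sortedSpec {n : Type*} [Fintype n] [DecidableEq n] (M : Matrix n n ℝ) : List ℝ :=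
  (spec M).sort (· ≤ ·)

/-- The smallest eigenvalue of a real matrix. -/
def minEig {n : Type*} [Fintype n] [DecidableEq n] (M : Matrix n n ℝ) : ℝ :=
  (sortedSpec M).getD 0 0

/-- The Laplacian spectrum of a finite simple graph. -/
def lapSpec {V : Type*} [Fintype V] (G : SimpleGraph V) : Multiset ℝ :=
  spec (G.lapMatrix ℝ)

/-- Algebraic connectivity: the second smallest Laplacian eigenvalue. -/
def algConn {V : Type*} [Fintype V] (G : SimpleGraph V) : ℝ :=
  (sortedSpec (G.lapMatrix ℝ)).getD 1 0

/-- `Q_{m-1}(G) = A(G) + (m-1)·D(G)` as a real matrix. -/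
def qMatrix {V : Type*} [Fintype V] (G : SimpleGraph V) (m : ℕ) : Matrix V V ℝ :=
  G.adjMatrix ℝ + ((m : ℝ) - 1) • G.degMatrix ℝ

/-- `q_min^{m-1}(G)`: the smallest eigenvalue of `Q_{m-1}(G)`. -/
def qMin {V : Type*} [Fintype V] (G : SimpleGraph V) (m : ℕ) : ℝ :=
  minEig (qMatrix G m)

/-- `β_m(X) = L(X) × K_m`. -/
def betaM {V : Type*} (G : SimpleGraph V) (m : ℕ) : SimpleGraph (G.edgeSet × Fin m) :=
  tensorProd G.lineGraph (⊤ : SimpleGraph (Fin m))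

/-- The star graph `K_{1,n-1}` on `n` vertices, with center `0`. -/
def starGraph (n : ℕ) : SimpleGraph (Fin n) :=
  SimpleGraph.fromRel fun u _ => (u : ℕ) = 0

/-- The tree `T(k,s,t)`: a path on `k+1` vertices with `s` pendant vertices attached to the
first vertex and `t` pendant vertices attached to the last vertex. -/
def treeT (k s t : ℕ) : SimpleGraph (Fin (k+1) ⊕ (Fin s ⊕ Fin t)) :=
  SimpleGraph.fromRel fun u v => match u, v with
    | .inl i, .inl j => (i : ℕ) + 1 = (j : ℕ)
    | .inr (.inl _), .inl i => (i : ℕ) = 0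
    | .inr (.inr _), .inl i => (i : ℕ) = k
    | _, _ => False


open Polynomial Matrix Kronecker

lemma charpoly_similar {n : Type*} [Fintype n] [DecidableEq n] {R : Type*} [CommRing R]
    (M N P Pinv : Matrix n n R)
    (h1 : P * Pinv = 1) (h3 : M * P = P * N) :
    M.charpoly = N.charpoly := by
  have key : M.charmatrix * P.map C = P.map C * N.charmatrix := by
    unfold Matrix.charmatrix
    rw [sub_mul, mul_sub]
    congr 1
    · ext i j
      rw [Matrix.scalar_apply, Matrix.diagonal_mul, Matrix.mul_diagonal, mul_comm]
    · simp only [RingHom.mapMatrix_apply]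
      rw [← Matrix.map_mul, h3, Matrix.map_mul]
  have hdet := congrArg Matrix.det key
  rw [Matrix.det_mul, Matrix.det_mul] at hdet
  have hu : IsUnit (P.map C).det := by
    apply IsUnit.of_mul_eq_one (Pinv.map C).det
    rw [← Matrix.det_mul, ← Matrix.map_mul, h1, Matrix.map_one _ (map_zero C) (map_one C),
      Matrix.det_one]
  obtain ⟨d, hd⟩ := isUnit_iff_exists_inv.mp hu
  calc M.charpoly = M.charmatrix.det * ((P.map C).det * d) := by rw [hd, mul_one]; rfl
    _ = ((P.map C).det * N.charmatrix.det) * d := by rw [← mul_assoc, hdet]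
    _ = N.charmatrix.det * ((P.map C).det * d) := by ring
    _ = N.charpoly := by rw [hd, mul_one]; rfl

lemma charmatrix_blockDiagonal {n : Type*} [Fintype n] [DecidableEq n]
    {o : Type*} [DecidableEq o] [Fintype o] {R : Type*} [CommRing R]
    (f : o → Matrix n n R) :
    Matrix.charmatrix (Matrix.blockDiagonal f)
      = Matrix.blockDiagonal (fun k => Matrix.charmatrix (f k)) := by
  ext ⟨i, k⟩ ⟨j, l⟩
  simp only [charmatrix_apply, blockDiagonal_apply, diagonal_apply, Prod.mk.injEq]
  by_cases h : k = l
  · subst h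
    by_cases hij : i = j <;> simp [hij, charmatrix_apply, diagonal_apply]
  · simp [h]

lemma charpoly_blockDiagonal {n : Type*} [Fintype n] [DecidableEq n]
    {o : Type*} [DecidableEq o] [Fintype o] {R : Type*} [CommRing R]
    (f : o → Matrix n n R) :
    (Matrix.blockDiagonal f).charpoly = ∏ k, (f k).charpoly := by
  rw [Matrix.charpoly, charmatrix_blockDiagonal, Matrix.det_blockDiagonal]
  rfl

def Pm (m : ℕ) [NeZero m] : Matrix (Fin m) (Fin m) ℝ := fun i j =>
  if j = 0 then 1 else (if i = 0 then 1 else 0) - (if i = j then 1 else 0)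

def Pminv (m : ℕ) [NeZero m] : Matrix (Fin m) (Fin m) ℝ := fun i j =>
  if i = 0 then 1 / m else 1 / m - (if i = j then 1 else 0)

lemma Pm_colsum (m : ℕ) [NeZero m] (j : Fin m) :
    ∑ k, Pm m k j = if j = 0 then (m : ℝ) else 0 := by
  by_cases hj : j = 0
  · subst hj
    simp [Pm, Finset.card_univ]
  · rw [if_neg hj]
    have : ∀ k ∈ Finset.univ, Pm m k j
        = (if k = 0 then (1:ℝ) else 0) - (if k = j then 1 else 0) := by
      intro k _; simp [Pm, hj]
    rw [Finset.sum_congr rfl this, Finset.sum_sub_distrib,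
      Finset.sum_ite_eq' Finset.univ (0 : Fin m) (fun _ => (1:ℝ)),
      Finset.sum_ite_eq' Finset.univ j (fun _ => (1:ℝ))]
    simp

lemma Pm_mul_Pminv (m : ℕ) [NeZero m] : Pm m * Pminv m = 1 := by
  have hm0 : (m : ℝ) ≠ 0 := Nat.cast_ne_zero.mpr (NeZero.ne m)
  ext i k
  rw [Matrix.mul_apply, Matrix.one_apply,
    ← Finset.add_sum_erase _ _ (Finset.mem_univ (0 : Fin m))]
  have h0 : Pm m i 0 * Pminv m 0 k = 1 / m := by simp [Pm, Pminv]
  rw [h0]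
  by_cases hi : i = 0
  · subst hi
    have hc : ∀ j ∈ Finset.univ.erase (0 : Fin m), Pm m 0 j * Pminv m j k
        = 1 / m - (if j = k then 1 else 0) := by
      intro j hj
      have hj0 : j ≠ 0 := Finset.ne_of_mem_erase hj
      simp [Pm, Pminv, hj0, Ne.symm hj0]
    rw [Finset.sum_congr rfl hc, Finset.sum_sub_distrib, Finset.sum_const,
      Finset.sum_ite_eq' _ k (fun _ => (1:ℝ)),
      Finset.card_erase_of_mem (Finset.mem_univ _), Finset.card_univ, Fintype.card_fin]
    have h1m : (1 : ℕ) ≤ m := Nat.one_le_iff_ne_zero.mpr (NeZero.ne m)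
    by_cases hk : k = 0
    · subst hk
      simp only [Finset.mem_erase, ne_eq, not_true_eq_false, false_and, if_neg, if_pos rfl,
        Finset.mem_univ, and_true]
      rw [if_neg (by simp)]
      simp only [nsmul_eq_mul]
      push_cast [h1m]
      field_simp
      ring
    · rw [if_pos (Finset.mem_erase.mpr ⟨hk, Finset.mem_univ _⟩), if_neg (Ne.symm hk)]
      simp only [nsmul_eq_mul]
      push_cast [h1m]
      field_simp
      ring
  · have hc : ∀ j ∈ Finset.univ.erase (0 : Fin m), Pm m i j * Pminv m j k
        = if i = j then -(1 / (m : ℝ) - (if j = k then 1 else 0)) else 0 := by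
      intro j hj
      have hj0 : j ≠ 0 := Finset.ne_of_mem_erase hj
      by_cases hij : i = j
      · subst hij
        rw [if_pos rfl]
        simp only [Pm, Pminv, if_neg hj0, if_pos rfl]
        ring_nf
        simp
      · rw [if_neg hij]
        simp [Pm, Pminv, hj0, hij, hi]
    rw [Finset.sum_congr rfl hc,
      Finset.sum_ite_eq _ i (fun j => -(1 / (m:ℝ) - (if j = k then (1:ℝ) else 0))),
      if_pos (Finset.mem_erase.mpr ⟨hi, Finset.mem_univ _⟩)]
    by_cases hik : i = k <;> simp [hik]

/-- `Dm` is the diagonal matrix with `m` in position `(0,0)` and zeros elsewhere. -/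
def Dm (m : ℕ) [NeZero m] : Matrix (Fin m) (Fin m) ℝ :=
  Matrix.diagonal (fun j => if j = 0 then (m : ℝ) else 0)

/-- The all-ones matrix times `Pm` equals `Pm` times `Dm`. -/
lemma J_mul_Pm (m : ℕ) [NeZero m] :
    (Matrix.of fun _ _ => (1:ℝ)) * Pm m = Pm m * Dm m := by
  ext i j
  rw [Matrix.mul_apply, Dm, Matrix.mul_diagonal]
  have : ∀ k ∈ Finset.univ, (Matrix.of fun _ _ => (1:ℝ)) i k * Pm m k j = Pm m k j := by
    intro k _; simp
  rw [Finset.sum_congr rfl this, Pm_colsum]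
  by_cases hj : j = 0
  · subst hj; simp [Pm]
  · simp [hj]

/-- The Laplacian spectrum of `X × K_m` is the union of the spectrum of
`(m-1)·𝔏(X)` and `m-1` copies of the spectrum of `A(X) + (m-1)·D(X)`. -/
theorem laplacian_spectrum_tensor_complete {V : Type*} [Fintype V]
    (G : SimpleGraph V) (m : ℕ) (hm : 2 ≤ m) :
    lapSpec (tensorProd G (⊤ : SimpleGraph (Fin m))) =
      spec (((m : ℝ) - 1) • G.lapMatrix ℝ) + (m - 1) • spec (qMatrix G m) := by
  haveI : NeZero m := ⟨by omega⟩
  have h1m : (1 : ℕ) ≤ m := by omega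
  have hcast : ((m - 1 : ℕ) : ℝ) = (m : ℝ) - 1 := by push_cast [h1m]; ring
  set H := tensorProd G (⊤ : SimpleGraph (Fin m)) with hH
  have hadj : ∀ (v w : V) (i j : Fin m), H.Adj (v, i) (w, j) ↔ G.Adj v w ∧ i ≠ j := by
    intro v w i j
    rw [hH]
    show G.Adj v w ∧ (⊤ : SimpleGraph (Fin m)).Adj i j ↔ _
    rw [SimpleGraph.top_adj]
  -- degree of tensor product
  have hdeg : ∀ (v : V) (i : Fin m), H.degree (v, i) = G.degree v * (m - 1) := by
    intro v i
    have hnf : H.neighborFinset (v, i)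
        = G.neighborFinset v ×ˢ (⊤ : SimpleGraph (Fin m)).neighborFinset i := by
      ext ⟨w, j⟩
      simp only [SimpleGraph.mem_neighborFinset, Finset.mem_product]
      rw [hadj]
      simp
    rw [SimpleGraph.degree, hnf, Finset.card_product, ← SimpleGraph.degree, ← SimpleGraph.degree,
      SimpleGraph.complete_graph_degree, Fintype.card_fin]
  set Jm : Matrix (Fin m) (Fin m) ℝ := Matrix.of fun _ _ => (1:ℝ) with hJm
  -- the Laplacian of the tensor product in Kronecker form
  have hM : H.lapMatrix ℝ
      = qMatrix G m ⊗ₖ (1 : Matrix (Fin m) (Fin m) ℝ) - G.adjMatrix ℝ ⊗ₖ Jm := by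
    ext ⟨v, i⟩ ⟨w, j⟩
    rw [Matrix.sub_apply, Matrix.kroneckerMap_apply, Matrix.kroneckerMap_apply]
    rw [SimpleGraph.lapMatrix, Matrix.sub_apply, SimpleGraph.degMatrix,
      Matrix.diagonal_apply, SimpleGraph.adjMatrix_apply]
    simp only [qMatrix, Matrix.add_apply, Matrix.smul_apply, SimpleGraph.degMatrix,
      Matrix.diagonal_apply, SimpleGraph.adjMatrix_apply, smul_eq_mul, hJm, Matrix.of_apply,
      Matrix.one_apply]
    by_cases hvw : v = w
    · subst hvw
      have hnadj : ¬ G.Adj v v := SimpleGraph.irrefl G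
      by_cases hij : i = j
      · subst hij
        rw [if_pos rfl, if_neg (by rw [hadj]; tauto), if_pos rfl, if_pos rfl,
          if_neg hnadj, hdeg]
        push_cast [Nat.cast_sub h1m]
        ring
      · rw [if_neg (by simp [Prod.ext_iff, hij]), if_pos rfl, if_neg hnadj, if_neg hij,
          if_neg (by rw [hadj]; tauto)]
        ring
    · rw [if_neg (by simp [Prod.ext_iff, hvw]), if_neg hvw]
      by_cases hij : i = j
      · subst hij
        rw [if_neg (by rw [hadj]; tauto), if_pos rfl]
        ring
      · rw [if_neg hij]
        by_cases hG : G.Adj v w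
        · rw [if_pos ((hadj _ _ _ _).mpr ⟨hG, hij⟩), if_pos hG]; ring
        · rw [if_neg (by rw [hadj]; tauto), if_neg hG]; ring
  -- the block-diagonal form
  set B : Fin m → Matrix V V ℝ :=
    fun j => if j = 0 then ((m : ℝ) - 1) • G.lapMatrix ℝ else qMatrix G m with hB
  have hB0 : B 0 = ((m : ℝ) - 1) • G.lapMatrix ℝ := by rw [hB]; simp
  have hBj : ∀ j : Fin m, j ≠ 0 → B j = qMatrix G m := by
    intro j hj; rw [hB]; simp [hj]
  have hN : qMatrix G m ⊗ₖ (1 : Matrix (Fin m) (Fin m) ℝ) - G.adjMatrix ℝ ⊗ₖ Dm m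
      = Matrix.blockDiagonal B := by
    ext ⟨v, i⟩ ⟨w, j⟩
    rw [Matrix.sub_apply, Matrix.kroneckerMap_apply, Matrix.kroneckerMap_apply,
      Matrix.blockDiagonal_apply]
    simp only [Dm, Matrix.diagonal_apply, Matrix.one_apply]
    by_cases hij : i = j
    · subst hij
      rw [if_pos rfl, if_pos rfl, if_pos rfl]
      by_cases hi0 : i = 0
      · subst hi0
        rw [if_pos rfl, hB0]
        simp only [qMatrix, SimpleGraph.lapMatrix, Matrix.add_apply, Matrix.smul_apply,
          Matrix.sub_apply, smul_eq_mul]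
        ring
      · rw [if_neg hi0, hBj i hi0]
        ring
    · rw [if_neg hij, if_neg hij, if_neg hij]
      ring
  -- similarity
  have hPP : ((1 : Matrix V V ℝ) ⊗ₖ Pm m) * ((1 : Matrix V V ℝ) ⊗ₖ Pminv m) = 1 := by
    rw [← Matrix.mul_kronecker_mul, Matrix.one_mul, Pm_mul_Pminv, Matrix.one_kronecker_one]
  have hMP : H.lapMatrix ℝ * ((1 : Matrix V V ℝ) ⊗ₖ Pm m)
      = ((1 : Matrix V V ℝ) ⊗ₖ Pm m) * Matrix.blockDiagonal B := by
    rw [hM, ← hN, Matrix.sub_mul, Matrix.mul_sub,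
      ← Matrix.mul_kronecker_mul, ← Matrix.mul_kronecker_mul,
      ← Matrix.mul_kronecker_mul, ← Matrix.mul_kronecker_mul,
      Matrix.one_mul, Matrix.mul_one, Matrix.one_mul, Matrix.mul_one, Matrix.one_mul,
      Matrix.mul_one, J_mul_Pm]
  have hchar : (H.lapMatrix ℝ).charpoly = (Matrix.blockDiagonal B).charpoly :=
    charpoly_similar _ _ _ _ hPP hMP
  have hcp : (H.lapMatrix ℝ).charpoly
      = (((m : ℝ) - 1) • G.lapMatrix ℝ).charpoly * (qMatrix G m).charpoly ^ (m - 1) := by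
    have h2 : ∏ j ∈ Finset.univ.erase (0 : Fin m), (B j).charpoly
        = (qMatrix G m).charpoly ^ (m - 1) := by
      rw [Finset.prod_congr rfl (fun j hj => by rw [hBj j (Finset.ne_of_mem_erase hj)]),
        Finset.prod_const, Finset.card_erase_of_mem (Finset.mem_univ _), Finset.card_univ,
        Fintype.card_fin]
    rw [hchar, charpoly_blockDiagonal,
      ← Finset.mul_prod_erase Finset.univ _ (Finset.mem_univ (0 : Fin m)), hB0, h2]
  have key : (H.lapMatrix ℝ).charpoly.roots
      = (((m : ℝ) - 1) • G.lapMatrix ℝ).charpoly.roots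
        + (m - 1) • (qMatrix G m).charpoly.roots := by
    rw [hcp, Polynomial.roots_mul (mul_ne_zero (Matrix.charpoly_monic _).ne_zero
      (pow_ne_zero _ (Matrix.charpoly_monic _).ne_zero)), Polynomial.roots_pow]
  unfold lapSpec spec
  convert key using 3 <;> congr! <;> exact Subsingleton.elim _ _


end ArxivPaper
end
end

section
/- Let m ≥ 2, t ≥ 2, and let X = T(1,1,t). Then the smallest eigenvalue of Q_{m−1}(L(X)) = A(L(X)) + (m−1)·D(L(X)) is at most ((m−1)(t+2) − √(t²(m−1)² + 4))/2, and hence is strictly less than m−1. -/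
open scoped Classical

noncomputable section

namespace ArxivPaper

open Matrix in
lemma minEig_le_of_isRoot {n : Type*} [Fintype n] [DecidableEq n] {M : Matrix n n ℝ} {r : ℝ}
    (h : M.charpoly.IsRoot r) : minEig M ≤ r := by
  have hmem : r ∈ spec M := by
    rw [spec, Polynomial.mem_roots']
    exact ⟨(Matrix.charpoly_monic M).ne_zero, h⟩
  have hmem' : r ∈ sortedSpec M := (Multiset.mem_sort _).2 hmem
  have hsorted : (sortedSpec M).Pairwise (· ≤ ·) := Multiset.pairwise_sort _ _
  rcases hl : sortedSpec M with _ | ⟨a, l⟩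
  · rw [hl] at hmem'; simp at hmem'
  · rw [hl] at hmem' hsorted
    rcases List.mem_cons.1 hmem' with h1 | h1
    · simp [minEig, hl, h1]
    · have := (List.pairwise_cons.1 hsorted).1 r h1
      simpa [minEig, hl] using this

open Matrix in
lemma eig_isRoot {n : Type*} [Fintype n] [DecidableEq n] (M : Matrix n n ℝ)
    (hM : M.IsHermitian) (i : n) :
    M.charpoly.IsRoot (hM.eigenvalues i) := by
  have hev : (hM.eigenvalues i • (1 : Matrix n n ℝ) - M).det = 0 := by
    rw [← Matrix.exists_mulVec_eq_zero_iff]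
    refine ⟨⇑(hM.eigenvectorBasis i), ?_, ?_⟩
    · intro h0
      have h1 : hM.eigenvectorBasis i = 0 := by
        ext j; exact congrFun h0 j
      have := hM.eigenvectorBasis.orthonormal.1 i
      rw [h1] at this; simp at this
    · rw [Matrix.sub_mulVec, Matrix.smul_mulVec, Matrix.one_mulVec,
        hM.mulVec_eigenvectorBasis]
      simp
  have heq : M.charpoly.eval (hM.eigenvalues i)
      = (hM.eigenvalues i • (1 : Matrix n n ℝ) - M).det := by
    have h2 : M.charpoly.eval (hM.eigenvalues i)
        = (Polynomial.evalRingHom (hM.eigenvalues i)) M.charpoly := rfl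
    rw [h2, Matrix.charpoly, RingHom.map_det]
    congr 1
    ext a b
    by_cases h : a = b <;>
      simp [h, Matrix.charmatrix_apply, Matrix.one_apply, Matrix.smul_apply, Matrix.sub_apply,
        Matrix.diagonal_apply]
  rw [Polynomial.IsRoot, heq, hev]

open Matrix in
lemma rayleigh {n : Type*} [Fintype n] [DecidableEq n] (M : Matrix n n ℝ)
    (hM : M.IsHermitian) (v : n → ℝ) [Nonempty n] :
    ∃ i, hM.eigenvalues i * (v ⬝ᵥ v) ≤ v ⬝ᵥ (M *ᵥ v) := by
  obtain ⟨i0, -, hmin⟩ := Finset.exists_min_image Finset.univ hM.eigenvalues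
    ⟨Classical.arbitrary n, Finset.mem_univ _⟩
  refine ⟨i0, ?_⟩
  set U : Matrix n n ℝ := (hM.eigenvectorUnitary : Matrix n n ℝ) with hU
  have hsU : star U = Uᵀ := by
    rw [Matrix.star_eq_conjTranspose, Matrix.conjTranspose_eq_transpose_of_trivial]
  have hUUt : U * Uᵀ = 1 := by
    rw [← hsU]; exact (Matrix.mem_unitaryGroup_iff).mp hM.eigenvectorUnitary.2
  set w : n → ℝ := Uᵀ *ᵥ v with hw
  have hD : Matrix.diagonal ((RCLike.ofReal : ℝ → ℝ) ∘ hM.eigenvalues)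
      = Matrix.diagonal hM.eigenvalues := rfl
  have key : v ⬝ᵥ (M *ᵥ v) = ∑ i, hM.eigenvalues i * (w i)^2 := by
    conv_lhs => rw [hM.spectral_theorem, Unitary.conjStarAlgAut_apply, hsU, hD]
    rw [← Matrix.mulVec_mulVec, ← Matrix.mulVec_mulVec, dotProduct_mulVec,
      ← Matrix.mulVec_transpose, ← hw]
    simp only [dotProduct, Matrix.mulVec_diagonal]
    exact Finset.sum_congr rfl fun i _ => by ring
  have key2 : v ⬝ᵥ v = ∑ i, (w i)^2 := by
    have h2 : U *ᵥ w = v := by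
      rw [hw, Matrix.mulVec_mulVec, hUUt, Matrix.one_mulVec]
    have h1 : w ⬝ᵥ w = v ⬝ᵥ v := by
      conv_lhs => rw [hw]
      rw [dotProduct_mulVec w Uᵀ v, Matrix.vecMul_transpose, h2]
    rw [← h1]
    exact Finset.sum_congr rfl fun i _ => by ring
  rw [key, key2, Finset.mul_sum]
  exact Finset.sum_le_sum fun i _ =>
    mul_le_mul_of_nonneg_right (hmin i (Finset.mem_univ i)) (sq_nonneg _)

section TreeFacts

variable (t : ℕ)

def E0 : Sym2 (Fin 2 ⊕ (Fin 1 ⊕ Fin t)) := s(.inl 0, .inl 1)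
def E1 : Sym2 (Fin 2 ⊕ (Fin 1 ⊕ Fin t)) := s(.inr (.inl 0), .inl 0)
def Ep (y : Fin t) : Sym2 (Fin 2 ⊕ (Fin 1 ⊕ Fin t)) := s(.inr (.inr y), .inl 1)

lemma E0_mem : E0 t ∈ (treeT 1 1 t).edgeSet := by
  rw [E0, SimpleGraph.mem_edgeSet, treeT, SimpleGraph.fromRel_adj]
  exact ⟨by simp, Or.inl (by simp)⟩

lemma E1_mem : E1 t ∈ (treeT 1 1 t).edgeSet := by
  rw [E1, SimpleGraph.mem_edgeSet, treeT, SimpleGraph.fromRel_adj]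
  exact ⟨by simp, Or.inl (by simp)⟩

lemma Ep_mem (y : Fin t) : Ep t y ∈ (treeT 1 1 t).edgeSet := by
  rw [Ep, SimpleGraph.mem_edgeSet, treeT, SimpleGraph.fromRel_adj]
  exact ⟨by simp, Or.inl (by simp)⟩

set_option linter.unnecessarySeqFocus false in
lemma edge_class {e : Sym2 (Fin 2 ⊕ (Fin 1 ⊕ Fin t))} (he : e ∈ (treeT 1 1 t).edgeSet) :
    e = E0 t ∨ e = E1 t ∨ ∃ y, e = Ep t y := by
  induction e using Sym2.ind with
  | _ u v =>
    rw [SimpleGraph.mem_edgeSet, treeT, SimpleGraph.fromRel_adj] at he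
    obtain ⟨hne, h | h⟩ := he
    · rcases u with i | x | y <;> rcases v with j | x' | y' <;>
        simp_all [E0, E1, Ep] <;> omega
    · rcases u with i | x | y <;> rcases v with j | x' | y' <;>
        simp_all [E0, E1, Ep] <;> omega

def ev0 : (treeT 1 1 t).edgeSet := ⟨E0 t, E0_mem t⟩
def ev1 : (treeT 1 1 t).edgeSet := ⟨E1 t, E1_mem t⟩
def evp (y : Fin t) : (treeT 1 1 t).edgeSet := ⟨Ep t y, Ep_mem t y⟩

lemma E0_ne_E1 : E0 t ≠ E1 t := by simp [E0, E1, Sym2.eq_iff]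
lemma E0_ne_Ep (y : Fin t) : E0 t ≠ Ep t y := by simp [E0, Ep, Sym2.eq_iff]
lemma E1_ne_Ep (y : Fin t) : E1 t ≠ Ep t y := by simp [E1, Ep, Sym2.eq_iff]
lemma Ep_inj {y y' : Fin t} (h : Ep t y = Ep t y') : y = y' := by
  simpa [Ep, Sym2.eq_iff] using h

lemma card_edgeSet : Fintype.card (treeT 1 1 t).edgeSet = t + 2 := by
  classical
  let φ : Unit ⊕ Unit ⊕ Fin t → (treeT 1 1 t).edgeSet := fun x =>
    match x with
    | .inl _ => ev0 t
    | .inr (.inl _) => ev1 t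
    | .inr (.inr y) => evp t y
  have hbij : Function.Bijective φ := by
    constructor
    · rintro (⟨⟩ | ⟨⟩ | y) (⟨⟩ | ⟨⟩ | y') h <;>
        simp only [φ, ev0, ev1, evp, Subtype.mk.injEq] at h ⊢
      · exact absurd h (E0_ne_E1 t)
      · exact absurd h (E0_ne_Ep t y')
      · exact absurd h.symm (E0_ne_E1 t)
      · exact absurd h (E1_ne_Ep t y')
      · exact absurd h.symm (E0_ne_Ep t y)
      · exact absurd h.symm (E1_ne_Ep t y)
      · rw [Ep_inj t h]
    · rintro ⟨e, he⟩
      rcases edge_class t he with h | h | ⟨y, h⟩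
      · exact ⟨.inl (), by simp [φ, ev0, h]⟩
      · exact ⟨.inr (.inl ()), by simp [φ, ev1, h]⟩
      · exact ⟨.inr (.inr y), by simp [φ, evp, h]⟩
  rw [← Fintype.card_congr (Equiv.ofBijective φ hbij)]
  simp; omega

lemma nbhd1 : (treeT 1 1 t).lineGraph.neighborSet (ev1 t) = {ev0 t} := by
  ext f
  rw [SimpleGraph.mem_neighborSet, SimpleGraph.lineGraph_adj_iff_exists]
  constructor
  · rintro ⟨hne, v, hv1, hvf⟩
    rcases edge_class t f.2 with h | h | ⟨y, h⟩
    · exact Set.mem_singleton_iff.2 (Subtype.ext h)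
    · exact absurd (Subtype.ext h : f = ev1 t) (Ne.symm hne)
    · exfalso
      have hv1' : v ∈ E1 t := hv1
      have hvf' : v ∈ Ep t y := h ▸ hvf
      rw [E1, Sym2.mem_iff] at hv1'
      rw [Ep, Sym2.mem_iff] at hvf'
      rcases hv1' with rfl | rfl <;> rcases hvf' with hh | hh <;> simp_all [Fin.ext_iff]
  · rintro rfl
    refine ⟨fun hh => (E0_ne_E1 t) (congrArg Subtype.val hh).symm, Sum.inl 0, ?_, ?_⟩
    · simp [ev1, E1]
    · simp [ev0, E0]

lemma nbhd0 : (treeT 1 1 t).lineGraph.neighborSet (ev0 t) = {ev0 t}ᶜ := by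
  ext f
  rw [SimpleGraph.mem_neighborSet, SimpleGraph.lineGraph_adj_iff_exists]
  constructor
  · rintro ⟨hne, -⟩
    exact fun hf => hne (Set.mem_singleton_iff.1 hf).symm
  · intro hf
    have hne : (ev0 t) ≠ f := fun hh => hf (Set.mem_singleton_iff.2 hh.symm)
    refine ⟨hne, ?_⟩
    rcases edge_class t f.2 with h | h | ⟨y, h⟩
    · exact absurd (Subtype.ext h.symm : ev0 t = f) hne
    · exact ⟨Sum.inl 0, by simp [ev0, E0], by simp [h, E1]⟩
    · exact ⟨Sum.inl 1, by simp [ev0, E0], by simp [h, Ep]⟩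

lemma deg1 : (treeT 1 1 t).lineGraph.degree (ev1 t) = 1 := by
  rw [← SimpleGraph.card_neighborSet_eq_degree]
  rw [Fintype.card_eq_one_iff]
  refine ⟨⟨ev0 t, by rw [nbhd1]; rfl⟩, ?_⟩
  rintro ⟨y, hy⟩
  rw [nbhd1] at hy
  exact Subtype.ext hy

lemma deg0 : (treeT 1 1 t).lineGraph.degree (ev0 t) = t + 1 := by
  rw [← SimpleGraph.card_neighborSet_eq_degree]
  have h : Fintype.card ((treeT 1 1 t).lineGraph.neighborSet (ev0 t))
      = Fintype.card (({ev0 t}ᶜ : Set (treeT 1 1 t).edgeSet)) :=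
    Fintype.card_congr (Equiv.setCongr (nbhd0 t))
  rw [h, Fintype.card_compl_set, Set.card_singleton, card_edgeSet]
  omega

lemma adj01 : (treeT 1 1 t).lineGraph.Adj (ev0 t) (ev1 t) := by
  have : ev0 t ∈ (treeT 1 1 t).lineGraph.neighborSet (ev1 t) := by rw [nbhd1]; rfl
  exact (SimpleGraph.mem_neighborSet _ _ _ |>.1 this).symm

lemma ev0_ne_ev1 : ev0 t ≠ ev1 t := fun h => E0_ne_E1 t (congrArg Subtype.val h)

end TreeFacts

set_option maxHeartbeats 1000000 in
/-- for `X = T(1,1,t)` with `t ≥ 2`, the smallest eigenvalue of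
`Q_{m-1}(L(X))` is at most `((m-1)(t+2) - √(t²(m-1)² + 4))/2 < m-1`. -/
theorem qMin_lineGraph_T11t (m t : ℕ) (hm : 2 ≤ m) (ht : 2 ≤ t) :
    qMin (treeT 1 1 t).lineGraph m ≤
      (((m:ℝ)-1)*((t:ℝ)+2) - Real.sqrt ((t:ℝ)^2*((m:ℝ)-1)^2 + 4))/2 ∧
    qMin (treeT 1 1 t).lineGraph m < (m:ℝ) - 1 := by
  set L := (treeT 1 1 t).lineGraph with hL
  set Q := qMatrix L m with hQdef
  set r : ℝ := Real.sqrt ((t:ℝ)^2*((m:ℝ)-1)^2 + 4) with hrdef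
  set lam : ℝ := (((m:ℝ)-1)*((t:ℝ)+2) - r)/2 with hlam
  have hr2 : r^2 = (t:ℝ)^2*((m:ℝ)-1)^2 + 4 := by
    rw [hrdef]
    exact Real.sq_sqrt (by positivity)
  have hrnn : 0 ≤ r := Real.sqrt_nonneg _
  have hm1 : (1:ℝ) ≤ (m:ℝ) := by
    have : (2:ℝ) ≤ (m:ℝ) := by exact_mod_cast hm
    linarith
  have htnn : (0:ℝ) ≤ (t:ℝ) := Nat.cast_nonneg t
  -- Step 1: qMin ≤ lam
  have hQherm : Q.IsHermitian := by
    rw [Matrix.IsHermitian, Matrix.conjTranspose_eq_transpose_of_trivial]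
    ext i j
    simp only [Matrix.transpose_apply, hQdef, qMatrix, Matrix.add_apply, Matrix.smul_apply,
      SimpleGraph.adjMatrix_apply, SimpleGraph.degMatrix, Matrix.diagonal, Matrix.of_apply]
    by_cases h : i = j
    · subst h; rfl
    · rw [if_neg h, if_neg (Ne.symm h), SimpleGraph.adj_comm]
  have hne : Nonempty L.edgeSet → True := fun _ => trivial
  haveI : Nonempty (treeT 1 1 t).edgeSet := ⟨ev0 t⟩
  set b : ℝ := lam - ((m:ℝ)-1)*((t:ℝ)+1) with hb
  set v : (treeT 1 1 t).edgeSet → ℝ := Pi.single (ev0 t) 1 + Pi.single (ev1 t) b with hv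
  have hQ00 : Q (ev0 t) (ev0 t) = ((m:ℝ)-1) * ((t:ℝ)+1) := by
    rw [hQdef, qMatrix, Matrix.add_apply, Matrix.smul_apply, SimpleGraph.adjMatrix_apply,
      SimpleGraph.degMatrix]
    simp only [Matrix.diagonal, Matrix.of_apply]
    rw [if_neg (L.irrefl)]
    simp only [ite_true]
    rw [hL, deg0, smul_eq_mul]
    push_cast
    ring
  have hQ11 : Q (ev1 t) (ev1 t) = ((m:ℝ)-1) := by
    rw [hQdef, qMatrix, Matrix.add_apply, Matrix.smul_apply, SimpleGraph.adjMatrix_apply,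
      SimpleGraph.degMatrix]
    simp only [Matrix.diagonal, Matrix.of_apply]
    rw [if_neg (L.irrefl)]
    simp only [ite_true]
    rw [hL, deg1, smul_eq_mul]
    push_cast
    ring
  have hQ01 : Q (ev0 t) (ev1 t) = 1 := by
    rw [hQdef, qMatrix, Matrix.add_apply, Matrix.smul_apply, SimpleGraph.adjMatrix_apply,
      SimpleGraph.degMatrix]
    simp only [Matrix.diagonal, Matrix.of_apply]
    rw [if_neg (ev0_ne_ev1 t), if_pos (adj01 t), smul_eq_mul]
    ring
  have hQ10 : Q (ev1 t) (ev0 t) = 1 := by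
    rw [hQdef, qMatrix, Matrix.add_apply, Matrix.smul_apply, SimpleGraph.adjMatrix_apply,
      SimpleGraph.degMatrix]
    simp only [Matrix.diagonal, Matrix.of_apply]
    rw [if_neg (ev0_ne_ev1 t).symm, if_pos (adj01 t).symm, smul_eq_mul]
    ring
  have hvv : dotProduct v v = 1 + b^2 := by
    rw [hv]
    rw [add_dotProduct, single_dotProduct, single_dotProduct]
    simp [Pi.single_apply, ev0_ne_ev1 t, (ev0_ne_ev1 t).symm]
    ring
  have hvQv : dotProduct v (Q.mulVec v) = lam * (1 + b^2) := by
    have hexp : dotProduct v (Q.mulVec v)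
        = Q (ev0 t) (ev0 t) + b * Q (ev1 t) (ev0 t)
          + (Q (ev0 t) (ev1 t) * b + b * (Q (ev1 t) (ev1 t) * b)) := by
      rw [hv, Matrix.mulVec_add, Matrix.mulVec_single, Matrix.mulVec_single]
      rw [dotProduct_add, add_dotProduct, add_dotProduct,
        single_dotProduct, single_dotProduct, single_dotProduct,
        single_dotProduct]
      simp only [Pi.smul_apply, Matrix.col_apply, op_smul_eq_mul]
      ring
    rw [hexp, hQ00, hQ01, hQ10, hQ11, hb, hlam]
    linear_combination ((((m:ℝ)-1)*(t:ℝ) + r)/8 * 1) * hr2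
  have hvvpos : (0:ℝ) < dotProduct v v := by
    rw [hvv]; positivity
  obtain ⟨i, hi⟩ := @rayleigh _ _ (fun a b => Classical.propDecidable (a = b)) Q hQherm v ⟨ev0 t⟩
  have heig : (@Matrix.IsHermitian.eigenvalues ℝ _ _ _ _ (fun a b => Classical.propDecidable (a = b))
      hQherm) i ≤ lam := by
    rw [hvQv, ← hvv] at hi
    exact le_of_mul_le_mul_right (by linarith [hi]) hvvpos
  have h1 := @minEig_le_of_isRoot _ _ (fun a b => Classical.propDecidable (a = b)) Q _
    (@eig_isRoot _ _ (fun a b => Classical.propDecidable (a = b)) Q hQherm i)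
  have hqmin : qMin L m ≤ lam := le_trans h1 heig
  have hlt : lam < (m:ℝ) - 1 := by
    rw [hlam]
    nlinarith [hr2, hrnn, hm1, htnn]
  exact ⟨hqmin, lt_of_le_of_lt hqmin hlt⟩

end ArxivPaper
end
end

section
/- Let m ≥ 2 and let X = T(1,s,t) with s, t ≥ 2. The matrix Q_{m−1}(L(X)) = A(L(X)) + (m−1)·D(L(X)) has eigenvalue (m−1)s − 1 with multiplicity s−1, eigenvalue (m−1)t − 1 with multiplicity t−1, and three further eigenvalues λ₁, λ₂, λ₃ satisfying λ₁+λ₂+λ₃ = (2m−1)(s+t) − 2, λ₁λ₂+λ₂λ₃+λ₃λ₁ = m(m−1)s² + m(m−1)t² − (3m−1)s − (3m−1)t + m(3m−2)st + 1, and λ₁λ₂λ₃ = m(1−m)s² + m(1−m)t² + ms + mt − 2m²st + m²(m−1)s²t + m²(m−1)st². -/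
open scoped Classical

noncomputable section

namespace ArxivPaper

open Polynomial Matrix



section
variable {n : Type*} [Fintype n] [DecidableEq n] {R : Type*} [CommRing R]

lemma my_charpoly_conj (P T Q : Matrix n n R) (h : P * Q = 1) :
    (P * T * Q).charpoly = T.charpoly := by
  have hPQ : P.map (C : R →+* R[X]) * Q.map C = 1 := by
    rw [← Matrix.map_mul, h]
    simp
  have hs1 : Matrix.scalar n (X : R[X]) * Q.map C = (X : R[X]) • Q.map C := by
    ext i j
    simp [Matrix.scalar_apply, Matrix.diagonal_mul]
  have hs2 : (X : R[X]) • (1 : Matrix n n R[X]) = Matrix.scalar n (X : R[X]) := by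
    ext i j
    by_cases hij : i = j <;> simp [Matrix.scalar_apply, Matrix.one_apply, hij]
  have h1 : charmatrix (P * T * Q) = P.map C * charmatrix T * Q.map C := by
    unfold charmatrix
    rw [Matrix.mul_sub, Matrix.sub_mul]
    congr 1
    · rw [mul_assoc, hs1, Matrix.mul_smul, hPQ, hs2]
    · simp only [RingHom.mapMatrix_apply]
      rw [← Matrix.map_mul, ← Matrix.map_mul]
  unfold Matrix.charpoly
  rw [h1, Matrix.det_mul, Matrix.det_mul, mul_right_comm, ← Matrix.det_mul, hPQ,
    Matrix.det_one, one_mul]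

lemma my_charpoly_diagonal (d : n → R) :
    (Matrix.diagonal d).charpoly = ∏ i, (X - C (d i)) := by
  have hc : charmatrix (Matrix.diagonal d) = Matrix.diagonal fun i => (X : R[X]) - C (d i) := by
    ext i j
    by_cases hij : i = j
    · subst hij; simp
    · simp [hij, Matrix.diagonal_apply_ne _ hij]
  rw [Matrix.charpoly, hc, Matrix.det_diagonal]
end

lemma my_charpoly_hermitian {n : Type*} [Fintype n] [DecidableEq n]
    (A : Matrix n n ℝ) (hA : A.IsHermitian) :
    A.charpoly = ∏ i, (X - C (hA.eigenvalues i)) := by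
  have hU : (hA.eigenvectorUnitary : Matrix n n ℝ) * star (hA.eigenvectorUnitary : Matrix n n ℝ) = 1 :=
    (Matrix.mem_unitaryGroup_iff).mp (hA.eigenvectorUnitary).2
  calc A.charpoly
      = ((hA.eigenvectorUnitary : Matrix n n ℝ) * Matrix.diagonal (RCLike.ofReal ∘ hA.eigenvalues)
          * star (hA.eigenvectorUnitary : Matrix n n ℝ)).charpoly := congrArg Matrix.charpoly hA.spectral_theorem
    _ = (Matrix.diagonal (RCLike.ofReal ∘ hA.eigenvalues)).charpoly := my_charpoly_conj _ _ _ hU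
    _ = ∏ i, (X - C (hA.eigenvalues i)) := by
        rw [my_charpoly_diagonal]
        simp [Function.comp, RCLike.ofReal_real_eq_id]

abbrev Widx (s t : ℕ) := (Fin (s-1) ⊕ Fin (t-1)) ⊕ Fin 3

noncomputable def matN (m s t : ℕ) : Matrix (Widx s t) (Widx s t) ℝ := fun x y =>
  match x, y with
  | .inl (.inl r), .inl (.inl c) => if r = c then ((m:ℝ)-1)*s else 1
  | .inl (.inl _), .inl (.inr _) => 0
  | .inl (.inr _), .inl (.inl _) => 0
  | .inl (.inr r), .inl (.inr c) => if r = c then ((m:ℝ)-1)*t else 1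
  | .inl (.inl _), .inr k => if k = 0 ∨ k = 2 then 1 else 0
  | .inl (.inr _), .inr k => if k = 1 ∨ k = 2 then 1 else 0
  | .inr k, .inl (.inl _) => if k = 0 ∨ k = 2 then 1 else 0
  | .inr k, .inl (.inr _) => if k = 1 ∨ k = 2 then 1 else 0
  | .inr k, .inr k' =>
      if k = k' then
        (if k = 0 then ((m:ℝ)-1)*s else if k = 1 then ((m:ℝ)-1)*t else ((m:ℝ)-1)*((s:ℝ)+(t:ℝ)))
      else (if (k = 0 ∧ k' = 1) ∨ (k = 1 ∧ k' = 0) then 0 else 1)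

noncomputable def matP (s t : ℕ) : Matrix (Widx s t) (Widx s t) ℝ := fun x y =>
  match x, y with
  | .inl (.inl r), .inl (.inl c) => if r = c then 1 else 0
  | .inl (.inl _), .inl (.inr _) => 0
  | .inl (.inr _), .inl (.inl _) => 0
  | .inl (.inr r), .inl (.inr c) => if r = c then 1 else 0
  | .inl (.inl _), .inr k => if k = 0 then 1 else 0
  | .inl (.inr _), .inr k => if k = 1 then 1 else 0
  | .inr k, .inl (.inl _) => if k = 0 then -1 else 0
  | .inr k, .inl (.inr _) => if k = 1 then -1 else 0
  | .inr k, .inr k' => if k = k' then 1 else 0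

noncomputable def matPinv (s t : ℕ) : Matrix (Widx s t) (Widx s t) ℝ := fun x y =>
  match x, y with
  | .inl (.inl r), .inl (.inl c) => (if r = c then 1 else 0) - 1/(s:ℝ)
  | .inl (.inl _), .inl (.inr _) => 0
  | .inl (.inr _), .inl (.inl _) => 0
  | .inl (.inr r), .inl (.inr c) => (if r = c then 1 else 0) - 1/(t:ℝ)
  | .inl (.inl _), .inr k => if k = 0 then -(1/(s:ℝ)) else 0
  | .inl (.inr _), .inr k => if k = 1 then -(1/(t:ℝ)) else 0
  | .inr k, .inl (.inl _) => if k = 0 then 1/(s:ℝ) else 0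
  | .inr k, .inl (.inr _) => if k = 1 then 1/(t:ℝ) else 0
  | .inr k, .inr k' =>
      if k = 0 then (if k' = 0 then 1/(s:ℝ) else 0)
      else if k = 1 then (if k' = 1 then 1/(t:ℝ) else 0)
      else (if k' = 2 then 1 else 0)

noncomputable def matB (m s t : ℕ) : Matrix (Fin 3) (Fin 3) ℝ :=
  !![(m:ℝ)*s - 1, 0, 1; 0, (m:ℝ)*t - 1, 1; (s:ℝ), (t:ℝ), ((m:ℝ)-1)*((s:ℝ)+(t:ℝ))]

noncomputable def matT (m s t : ℕ) : Matrix (Widx s t) (Widx s t) ℝ :=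
  Matrix.fromBlocks
    (Matrix.diagonal (Sum.elim (fun _ => ((m:ℝ)-1)*(s:ℝ) - 1) (fun _ => ((m:ℝ)-1)*(t:ℝ) - 1)))
    0 0 (matB m s t)

lemma matP_mul_matPinv {s t : ℕ} (hs : 2 ≤ s) (ht : 2 ≤ t) :
    matP s t * matPinv s t = 1 := by
  have hs0 : (s:ℝ) ≠ 0 := Nat.cast_ne_zero.mpr (by omega)
  have ht0 : (t:ℝ) ≠ 0 := Nat.cast_ne_zero.mpr (by omega)
  have hsc : ((s-1:ℕ):ℝ) = (s:ℝ) - 1 := by rw [Nat.cast_sub (by omega)]; norm_num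
  have htc : ((t-1:ℕ):ℝ) = (t:ℝ) - 1 := by rw [Nat.cast_sub (by omega)]; norm_num
  ext x y
  rcases x with (r|r)|k <;> rcases y with (c|c)|k'
  all_goals try fin_cases k
  all_goals try fin_cases k'
  all_goals
    simp only [Matrix.mul_apply, Fintype.sum_sum_type, Matrix.one_apply, matP, matPinv]
  all_goals
    simp [Fin.sum_univ_three, mul_sub, sub_mul, ite_mul, mul_ite, mul_one, mul_zero,
      Finset.sum_sub_distrib, Finset.sum_ite_eq, Finset.sum_ite_eq', Finset.sum_const,
      Finset.card_univ, Fintype.card_fin, nsmul_eq_mul, hsc, htc, Sum.inl.injEq]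
  all_goals try simp [Finset.sum_add_distrib, ite_mul, mul_ite, Finset.sum_ite_eq,
    Finset.sum_ite_eq', Finset.sum_const, Finset.card_univ, Fintype.card_fin, nsmul_eq_mul,
    hsc, htc]
  all_goals try split_ifs
  all_goals try field_simp
  all_goals try ring


lemma matN_mul_matP {m s t : ℕ} (hs : 2 ≤ s) (ht : 2 ≤ t) :
    matN m s t * matP s t = matP s t * matT m s t := by
  have hsc : ((s-1:ℕ):ℝ) = (s:ℝ) - 1 := by rw [Nat.cast_sub (by omega)]; norm_num
  have htc : ((t-1:ℕ):ℝ) = (t:ℝ) - 1 := by rw [Nat.cast_sub (by omega)]; norm_num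
  have hone : ∀ (n : ℕ) (r : Fin n) (a : ℝ), (∑ x : Fin n, if r = x then a else 1) = a + ((n:ℝ) - 1) := by
    intro n r a
    have h : ∀ x : Fin n, (if r = x then a else 1) = (if r = x then a - 1 else 0) + 1 := by
      intro x; split <;> ring
    simp only [h, Finset.sum_add_distrib, Finset.sum_ite_eq, Finset.mem_univ, if_pos,
      Finset.sum_const, Finset.card_univ, Fintype.card_fin, nsmul_eq_mul, mul_one]
    ring
  ext x y
  rcases x with (r|r)|k <;> rcases y with (c|c)|k'
  all_goals try fin_cases k
  all_goals try fin_cases k'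
  all_goals
    simp only [Matrix.mul_apply, Fintype.sum_sum_type, matN, matP, matT, matB,
      Matrix.fromBlocks_apply₁₁, Matrix.fromBlocks_apply₁₂, Matrix.fromBlocks_apply₂₁,
      Matrix.fromBlocks_apply₂₂, Matrix.diagonal_apply, Sum.elim_inl, Sum.elim_inr]
  all_goals
    simp [Fin.sum_univ_three, mul_sub, sub_mul, ite_mul, mul_ite, mul_one, mul_zero,
      Finset.sum_sub_distrib, Finset.sum_add_distrib, Finset.sum_ite_eq, Finset.sum_ite_eq',
      Finset.sum_const, Finset.card_univ, Fintype.card_fin, nsmul_eq_mul, hsc, htc,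
      Sum.inl.injEq, Sum.inr.injEq, hone]
  all_goals try split_ifs
  all_goals try ring

noncomputable def matB' (m s t : ℕ) : Matrix (Fin 3) (Fin 3) ℝ :=
  !![(m:ℝ)*s - 1, 0, Real.sqrt s; 0, (m:ℝ)*t - 1, Real.sqrt t;
     Real.sqrt s, Real.sqrt t, ((m:ℝ)-1)*((s:ℝ)+(t:ℝ))]

lemma matB'_isHermitian (m s t : ℕ) : (matB' m s t).IsHermitian := by
  unfold Matrix.IsHermitian
  ext i j
  fin_cases i <;> fin_cases j <;>
    simp [matB', Matrix.conjTranspose_apply]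

lemma matB_charpoly (m s t : ℕ) :
    (matB m s t).charpoly =
      (X - C ((m:ℝ)*s - 1)) * (X - C ((m:ℝ)*t - 1)) * (X - C (((m:ℝ)-1)*((s:ℝ)+(t:ℝ))))
        - C (t:ℝ) * (X - C ((m:ℝ)*s - 1)) - C (s:ℝ) * (X - C ((m:ℝ)*t - 1)) := by
  rw [Matrix.charpoly, Matrix.det_fin_three]
  simp [charmatrix_apply, Matrix.diagonal_apply, matB]
  ring

lemma matB'_charpoly (m s t : ℕ) :
    (matB' m s t).charpoly =
      (X - C ((m:ℝ)*s - 1)) * (X - C ((m:ℝ)*t - 1)) * (X - C (((m:ℝ)-1)*((s:ℝ)+(t:ℝ))))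
        - C (t:ℝ) * (X - C ((m:ℝ)*s - 1)) - C (s:ℝ) * (X - C ((m:ℝ)*t - 1)) := by
  have hCs : (C (Real.sqrt s) : ℝ[X]) * C (Real.sqrt s) = ((s:ℕ) : ℝ[X]) := by
    rw [← C_mul, Real.mul_self_sqrt (by positivity)]
    simp
  have hCt : (C (Real.sqrt t) : ℝ[X]) * C (Real.sqrt t) = ((t:ℕ) : ℝ[X]) := by
    rw [← C_mul, Real.mul_self_sqrt (by positivity)]
    simp
  rw [Matrix.charpoly, Matrix.det_fin_three]
  simp [charmatrix_apply, Matrix.diagonal_apply, matB', map_sub, _root_.map_mul, _root_.map_one, map_natCast]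
  linear_combination (((m:ℕ) : ℝ[X]) * ((s:ℕ) : ℝ[X]) - 1 - X) * hCt
    + (((m:ℕ) : ℝ[X]) * ((t:ℕ) : ℝ[X]) - 1 - X) * hCs

lemma matN_charpoly {m s t : ℕ} (hs : 2 ≤ s) (ht : 2 ≤ t) :
    (matN m s t).charpoly =
      (X - C (((m:ℝ)-1)*(s:ℝ) - 1))^(s-1) * (X - C (((m:ℝ)-1)*(t:ℝ) - 1))^(t-1)
        * (matB m s t).charpoly := by
  have hN : matN m s t = matP s t * matT m s t * matPinv s t := by
    rw [← matN_mul_matP hs ht]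
    rw [Matrix.mul_assoc, matP_mul_matPinv hs ht, Matrix.mul_one]
  rw [hN, my_charpoly_conj _ _ _ (matP_mul_matPinv hs ht)]
  have hpd := my_charpoly_diagonal
    (Sum.elim (fun _ : Fin (s-1) => ((m:ℝ)-1)*(s:ℝ) - 1) (fun _ : Fin (t-1) => ((m:ℝ)-1)*(t:ℝ) - 1))
  rw [Matrix.charpoly, matT, charmatrix_fromBlocks]
  have hz : ((0 : Matrix (Fin (s-1) ⊕ Fin (t-1)) (Fin 3) ℝ)).map (C : ℝ →+* ℝ[X]) = 0 := by
    ext i j; simp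
  have hz' : ((0 : Matrix (Fin 3) (Fin (s-1) ⊕ Fin (t-1)) ℝ)).map (C : ℝ →+* ℝ[X]) = 0 := by
    ext i j; simp
  rw [hz, hz', neg_zero, neg_zero, Matrix.det_fromBlocks_zero₂₁]
  rw [show (charmatrix (Matrix.diagonal (Sum.elim
      (fun _ : Fin (s-1) => ((m:ℝ)-1)*(s:ℝ) - 1) (fun _ : Fin (t-1) => ((m:ℝ)-1)*(t:ℝ) - 1)))).det
    = (Matrix.diagonal (Sum.elim (fun _ : Fin (s-1) => ((m:ℝ)-1)*(s:ℝ) - 1)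
        (fun _ : Fin (t-1) => ((m:ℝ)-1)*(t:ℝ) - 1))).charpoly from rfl, hpd]
  rw [Fintype.prod_sum_type]
  simp [Finset.prod_const, Matrix.charpoly]

lemma matN_charpoly_factored {m s t : ℕ} (hs : 2 ≤ s) (ht : 2 ≤ t) :
    ∃ l : Fin 3 → ℝ,
      (matN m s t).charpoly =
        (X - C (((m:ℝ)-1)*(s:ℝ) - 1))^(s-1) * (X - C (((m:ℝ)-1)*(t:ℝ) - 1))^(t-1)
          * ((X - C (l 0)) * (X - C (l 1)) * (X - C (l 2))) ∧
      ∀ x : ℝ, (x - l 0)*(x - l 1)*(x - l 2) =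
        (x - ((m:ℝ)*(s:ℝ)-1))*(x - ((m:ℝ)*(t:ℝ)-1))*(x - (((m:ℝ)-1)*((s:ℝ)+(t:ℝ))))
          - (t:ℝ)*(x - ((m:ℝ)*(s:ℝ)-1)) - (s:ℝ)*(x - ((m:ℝ)*(t:ℝ)-1)) := by
  have hB : (matB m s t).charpoly
      = (X - C ((matB'_isHermitian m s t).eigenvalues 0))
        * (X - C ((matB'_isHermitian m s t).eigenvalues 1))
        * (X - C ((matB'_isHermitian m s t).eigenvalues 2)) := by
    rw [matB_charpoly, ← matB'_charpoly,
      my_charpoly_hermitian _ (matB'_isHermitian m s t), Fin.prod_univ_three]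
  refine ⟨(matB'_isHermitian m s t).eigenvalues, ?_, ?_⟩
  · rw [matN_charpoly hs ht, hB]
  · intro x
    have h2 := congrArg (eval x) (hB.symm.trans (matB_charpoly m s t))
    simpa using h2


section TreeEdges
variable {s t : ℕ}

def eS (s t : ℕ) (i : Fin s) : Sym2 (Fin (1+1) ⊕ (Fin s ⊕ Fin t)) :=
  s(Sum.inl 0, Sum.inr (Sum.inl i))
def eT (s t : ℕ) (j : Fin t) : Sym2 (Fin (1+1) ⊕ (Fin s ⊕ Fin t)) :=
  s(Sum.inl 1, Sum.inr (Sum.inr j))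
def eM (s t : ℕ) : Sym2 (Fin (1+1) ⊕ (Fin s ⊕ Fin t)) :=
  s(Sum.inl 0, Sum.inl 1)

lemma eS_mem (i : Fin s) : eS s t i ∈ (treeT 1 s t).edgeSet := by
  simp [eS, SimpleGraph.mem_edgeSet, treeT, SimpleGraph.fromRel_adj]

lemma eT_mem (j : Fin t) : eT s t j ∈ (treeT 1 s t).edgeSet := by
  simp [eT, SimpleGraph.mem_edgeSet, treeT, SimpleGraph.fromRel_adj]

lemma eM_mem : eM s t ∈ (treeT 1 s t).edgeSet := by
  simp [eM, SimpleGraph.mem_edgeSet, treeT, SimpleGraph.fromRel_adj]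

def gmap (s t : ℕ) (hs : 2 ≤ s) (ht : 2 ≤ t) : Widx s t → (treeT 1 s t).edgeSet := fun x =>
  match x with
  | .inl (.inl r) => ⟨eS s t ⟨r.val+1, by omega⟩, eS_mem _⟩
  | .inl (.inr r) => ⟨eT s t ⟨r.val+1, by omega⟩, eT_mem _⟩
  | .inr k =>
      if k = 0 then ⟨eS s t ⟨0, by omega⟩, eS_mem _⟩
      else if k = 1 then ⟨eT s t ⟨0, by omega⟩, eT_mem _⟩
      else ⟨eM s t, eM_mem⟩

lemma gmap_bijective (hs : 2 ≤ s) (ht : 2 ≤ t) : Function.Bijective (gmap s t hs ht) := by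
  constructor
  · intro x y h
    rw [Subtype.ext_iff] at h
    rcases x with (r|r)|k <;> rcases y with (c|c)|c'
    all_goals try fin_cases k
    all_goals try fin_cases c'
    all_goals
      simp_all [gmap, eS, eT, eM, Sym2.eq_iff, Fin.ext_iff]
    all_goals omega
  · rintro ⟨e, he⟩
    induction e using Sym2.ind with
    | _ u v =>
      rw [SimpleGraph.mem_edgeSet] at he
      rcases u with a | x | x <;> rcases v with b | y | y <;>
        simp only [treeT, SimpleGraph.fromRel_adj, ne_eq] at he
      · -- inl a, inl b : middle edge
        refine ⟨Sum.inr 2, ?_⟩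
        rw [Subtype.ext_iff]
        have ha := a.isLt
        have hb := b.isLt
        obtain ⟨hne, h⟩ := he
        simp only [gmap]
        rw [if_neg (by decide), if_neg (by decide)]
        simp only [eM, Sym2.eq_iff]
        simp [Fin.ext_iff]
        omega
      · -- inl a, inr inl y : s-edge
        obtain ⟨hne, h | h⟩ := he
        · exact absurd h (by simp)
        · have ha : a = 0 := by apply Fin.ext; simpa using h
          subst ha
          by_cases hy : (y : ℕ) = 0
          · refine ⟨Sum.inr 0, ?_⟩
            rw [Subtype.ext_iff]
            simp only [gmap]
            simp only [if_true]
            simp only [eS, Sym2.eq_iff]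
            simp [Fin.ext_iff]
            omega
          · refine ⟨Sum.inl (Sum.inl ⟨y.val - 1, by omega⟩), ?_⟩
            rw [Subtype.ext_iff]
            simp only [gmap, eS, Sym2.eq_iff]
            simp [Fin.ext_iff]
            omega
      · -- inl a, inr inr y : t-edge
        obtain ⟨hne, h | h⟩ := he
        · exact absurd h (by simp)
        · have ha : a = 1 := by apply Fin.ext; simpa using h
          subst ha
          by_cases hy : (y : ℕ) = 0
          · refine ⟨Sum.inr 1, ?_⟩
            rw [Subtype.ext_iff]
            simp only [gmap]
            simp only [if_true]
            simp only [eT, Sym2.eq_iff]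
            simp [Fin.ext_iff]
            omega
          · refine ⟨Sum.inl (Sum.inr ⟨y.val - 1, by omega⟩), ?_⟩
            rw [Subtype.ext_iff]
            simp only [gmap, eT, Sym2.eq_iff]
            simp [Fin.ext_iff]
            omega
      · -- inr inl x, inl b
        obtain ⟨hne, h | h⟩ := he
        · have hb : b = 0 := by apply Fin.ext; simpa using h
          subst hb
          by_cases hx : (x : ℕ) = 0
          · refine ⟨Sum.inr 0, ?_⟩
            rw [Subtype.ext_iff]
            simp only [gmap]
            simp only [if_true]
            simp only [eS, Sym2.eq_iff]
            simp [Fin.ext_iff]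
            omega
          · refine ⟨Sum.inl (Sum.inl ⟨x.val - 1, by omega⟩), ?_⟩
            rw [Subtype.ext_iff]
            simp only [gmap, eS, Sym2.eq_iff]
            simp [Fin.ext_iff]
            omega
        · exact absurd h (by simp)
      · -- inr inl x, inr inl y : impossible
        exact absurd he (by simp)
      · exact absurd he (by simp)
      · -- inr inr x, inl b
        obtain ⟨hne, h | h⟩ := he
        · have hb : b = 1 := by apply Fin.ext; simpa using h
          subst hb
          by_cases hx : (x : ℕ) = 0
          · refine ⟨Sum.inr 1, ?_⟩
            rw [Subtype.ext_iff]
            simp only [gmap]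
            simp only [if_true]
            simp only [eT, Sym2.eq_iff]
            simp [Fin.ext_iff]
            omega
          · refine ⟨Sum.inl (Sum.inr ⟨x.val - 1, by omega⟩), ?_⟩
            rw [Subtype.ext_iff]
            simp only [gmap, eT, Sym2.eq_iff]
            simp [Fin.ext_iff]
            omega
        · exact absurd h (by simp)
      · exact absurd he (by simp)
      · exact absurd he (by simp)

end TreeEdges

def wadj (s t : ℕ) : Widx s t → Widx s t → Prop := fun x y =>
  match x, y with
  | .inl (.inl r), .inl (.inl c) => ¬ r = c
  | .inl (.inl _), .inl (.inr _) => False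
  | .inl (.inr _), .inl (.inl _) => False
  | .inl (.inr r), .inl (.inr c) => ¬ r = c
  | .inl (.inl _), .inr k => k = 0 ∨ k = 2
  | .inl (.inr _), .inr k => k = 1 ∨ k = 2
  | .inr k, .inl (.inl _) => k = 0 ∨ k = 2
  | .inr k, .inl (.inr _) => k = 1 ∨ k = 2
  | .inr k, .inr k' => ¬ k = k' ∧ ¬ ((k = 0 ∧ k' = 1) ∨ (k = 1 ∧ k' = 0))

lemma gmap_adj {s t : ℕ} (hs : 2 ≤ s) (ht : 2 ≤ t) (x y : Widx s t) :
    (treeT 1 s t).lineGraph.Adj (gmap s t hs ht x) (gmap s t hs ht y) ↔ wadj s t x y := by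
  rcases x with (r|r)|k <;> rcases y with (c|c)|k'
  all_goals try fin_cases k
  all_goals try fin_cases k'
  all_goals
    simp [gmap, wadj, SimpleGraph.lineGraph_adj_iff_exists, Subtype.ext_iff, eS, eT, eM,
      Sym2.eq_iff, Sym2.mem_iff, Fin.ext_iff]
  all_goals try omega

def matAdj (s t : ℕ) : Matrix (Widx s t) (Widx s t) ℝ := fun x y =>
  match x, y with
  | .inl (.inl r), .inl (.inl c) => if r = c then 0 else 1
  | .inl (.inl _), .inl (.inr _) => 0
  | .inl (.inr _), .inl (.inl _) => 0
  | .inl (.inr r), .inl (.inr c) => if r = c then 0 else 1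
  | .inl (.inl _), .inr k => if k = 0 ∨ k = 2 then 1 else 0
  | .inl (.inr _), .inr k => if k = 1 ∨ k = 2 then 1 else 0
  | .inr k, .inl (.inl _) => if k = 0 ∨ k = 2 then 1 else 0
  | .inr k, .inl (.inr _) => if k = 1 ∨ k = 2 then 1 else 0
  | .inr k, .inr k' =>
      if k = k' then 0 else (if (k = 0 ∧ k' = 1) ∨ (k = 1 ∧ k' = 0) then 0 else 1)

lemma gmap_adjMatrix {s t : ℕ} (hs : 2 ≤ s) (ht : 2 ≤ t) (x y : Widx s t) :
    (treeT 1 s t).lineGraph.adjMatrix ℝ (gmap s t hs ht x) (gmap s t hs ht y) = matAdj s t x y := by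
  rw [SimpleGraph.adjMatrix_apply, if_congr (gmap_adj hs ht x y) rfl rfl]
  rcases x with (r|r)|k <;> rcases y with (c|c)|k'
  all_goals try fin_cases k
  all_goals try fin_cases k'
  all_goals try (by_cases h : r = c <;> simp [wadj, matAdj, h])
  all_goals simp [wadj, matAdj]

lemma gmap_degree {s t : ℕ} (hs : 2 ≤ s) (ht : 2 ≤ t) (x : Widx s t) :
    (((treeT 1 s t).lineGraph.degree (gmap s t hs ht x) : ℕ) : ℝ) =
      Sum.elim (Sum.elim (fun _ => (s:ℝ)) (fun _ => (t:ℝ)))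
        (fun k => if k = 0 then (s:ℝ) else if k = 1 then (t:ℝ) else (s:ℝ)+(t:ℝ)) x := by
  have hsc : ((s-1:ℕ):ℝ) = (s:ℝ) - 1 := by rw [Nat.cast_sub (by omega)]; norm_num
  have htc : ((t-1:ℕ):ℝ) = (t:ℝ) - 1 := by rw [Nat.cast_sub (by omega)]; norm_num
  have hzero : ∀ (n : ℕ) (r : Fin n), (∑ z : Fin n, if r = z then (0:ℝ) else 1) = (n:ℝ) - 1 := by
    intro n r
    have h : ∀ z : Fin n, (if r = z then (0:ℝ) else 1) = 1 - (if r = z then 1 else 0) := by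
      intro z; split <;> ring
    simp only [h, Finset.sum_sub_distrib, Finset.sum_const, Finset.card_univ, Fintype.card_fin,
      nsmul_eq_mul, mul_one, Finset.sum_ite_eq, Finset.mem_univ, if_pos]
  have hdeg : ∀ v : (treeT 1 s t).edgeSet,
      (((treeT 1 s t).lineGraph.degree v : ℕ) : ℝ)
        = ∑ w : (treeT 1 s t).edgeSet, (treeT 1 s t).lineGraph.adjMatrix ℝ v w := by
    intro v
    have h := SimpleGraph.adjMatrix_mulVec_const_apply (G := (treeT 1 s t).lineGraph)
      (α := ℝ) (a := (1:ℝ)) (v := v)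
    simpa [Matrix.mulVec, dotProduct] using h.symm
  rw [hdeg]
  rw [← (gmap_bijective hs ht).sum_comp
    (fun w => (treeT 1 s t).lineGraph.adjMatrix ℝ (gmap s t hs ht x) w)]
  simp only [gmap_adjMatrix hs ht]
  rcases x with (r|r)|k
  all_goals try fin_cases k
  all_goals
    simp [matAdj, Fintype.sum_sum_type, Fin.sum_univ_three, hzero, hsc, htc,
      -Finset.sum_boole]
  all_goals try ring

lemma qMatrix_entry {m s t : ℕ} (hs : 2 ≤ s) (ht : 2 ≤ t) (x y : Widx s t) :
    qMatrix (treeT 1 s t).lineGraph m (gmap s t hs ht x) (gmap s t hs ht y) = matN m s t x y := by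
  have hinj := (gmap_bijective hs ht).1
  simp only [qMatrix, Matrix.add_apply, Matrix.smul_apply, smul_eq_mul]
  rw [gmap_adjMatrix hs ht]
  simp only [SimpleGraph.degMatrix, Matrix.diagonal_apply]
  simp only [hinj.eq_iff]
  by_cases hxy : x = y
  · subst hxy
    rw [if_pos rfl]
    rw [gmap_degree hs ht]
    rcases x with (r|r)|k
    all_goals try fin_cases k
    all_goals simp [matAdj, matN]
    all_goals ring
  · rw [if_neg hxy, mul_zero, add_zero]
    rcases x with (r|r)|k <;> rcases y with (c|c)|k'
    all_goals try fin_cases k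
    all_goals try fin_cases k'
    all_goals simp_all [matAdj, matN]

lemma qMatrix_charpoly_eq {s t : ℕ} (hs : 2 ≤ s) (ht : 2 ≤ t) (m : ℕ) :
    (qMatrix (treeT 1 s t).lineGraph m).charpoly = (matN m s t).charpoly := by
  have h := Matrix.charpoly_reindex
    (Equiv.ofBijective _ (gmap_bijective hs ht)).symm (qMatrix (treeT 1 s t).lineGraph m)
  rw [← h]
  congr 1
  ext x y
  rw [Matrix.reindex_apply, Matrix.submatrix_apply]
  exact qMatrix_entry hs ht x y

/-- the spectrum of `Q_{m-1}(L(T(1,s,t)))` for `s,t ≥ 2`. -/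
theorem spec_qMatrix_lineGraph_T1st (m s t : ℕ) (hm : 2 ≤ m) (hs : 2 ≤ s) (ht : 2 ≤ t) :
    ∃ l1 l2 l3 : ℝ,
      spec (qMatrix (treeT 1 s t).lineGraph m) =
        (Multiset.replicate (s-1) (((m:ℝ)-1)*(s:ℝ) - 1) +
         Multiset.replicate (t-1) (((m:ℝ)-1)*(t:ℝ) - 1) + {l1, l2, l3}) ∧
      l1 + l2 + l3 = (2*(m:ℝ)-1)*((s:ℝ)+(t:ℝ)) - 2 ∧
      l1*l2 + l2*l3 + l3*l1 =
        (m:ℝ)*((m:ℝ)-1)*(s:ℝ)^2 + (m:ℝ)*((m:ℝ)-1)*(t:ℝ)^2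
          - (3*(m:ℝ)-1)*(s:ℝ) - (3*(m:ℝ)-1)*(t:ℝ) + (m:ℝ)*(3*(m:ℝ)-2)*(s:ℝ)*(t:ℝ) + 1 ∧
      l1*l2*l3 =
        (m:ℝ)*(1-(m:ℝ))*(s:ℝ)^2 + (m:ℝ)*(1-(m:ℝ))*(t:ℝ)^2 + (m:ℝ)*(s:ℝ) + (m:ℝ)*(t:ℝ)
          - 2*(m:ℝ)^2*(s:ℝ)*(t:ℝ) + (m:ℝ)^2*((m:ℝ)-1)*(s:ℝ)^2*(t:ℝ)
          + (m:ℝ)^2*((m:ℝ)-1)*(s:ℝ)*(t:ℝ)^2 := by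
  obtain ⟨l, hfac, hval⟩ := matN_charpoly_factored (m := m) hs ht
  refine ⟨l 0, l 1, l 2, ?_, ?_, ?_, ?_⟩
  · show (qMatrix (treeT 1 s t).lineGraph m).charpoly.roots = _
    rw [qMatrix_charpoly_eq hs ht m, hfac]
    have hXa : ∀ c : ℝ, (X - C c) ≠ (0 : ℝ[X]) := fun c => Polynomial.X_sub_C_ne_zero c
    rw [Polynomial.roots_mul (mul_ne_zero
        (mul_ne_zero (pow_ne_zero _ (hXa _)) (pow_ne_zero _ (hXa _)))
        (mul_ne_zero (mul_ne_zero (hXa _) (hXa _)) (hXa _))),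
      Polynomial.roots_mul (mul_ne_zero (pow_ne_zero _ (hXa _)) (pow_ne_zero _ (hXa _))),
      Polynomial.roots_mul (mul_ne_zero (mul_ne_zero (hXa _) (hXa _)) (hXa _)),
      Polynomial.roots_mul (mul_ne_zero (hXa _) (hXa _)),
      Polynomial.roots_pow, Polynomial.roots_pow, Polynomial.roots_X_sub_C,
      Polynomial.roots_X_sub_C, Polynomial.roots_X_sub_C, Polynomial.roots_X_sub_C,
      Polynomial.roots_X_sub_C]
    simp only [Multiset.nsmul_singleton]
    rfl
  · linear_combination (-(1/2 : ℝ)) * hval 1 + (-(1/2 : ℝ)) * hval (-1) + hval 0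
  · linear_combination ((1/2 : ℝ)) * hval 1 + (-(1/2 : ℝ)) * hval (-1)
  · linear_combination (-1 : ℝ) * hval 0


end ArxivPaper
end
end

section
/- Let η ≥ 2 and μ ≥ 3. The Laplacian eigenvalues of the windmill graph W(η,μ) are exactly 0 with multiplicity 1, 1 with multiplicity η−1, μ with multiplicity η(μ−2), and ημ−η+1 with multiplicity 1. -/
open scoped Classical

noncomputable section

namespace ArxivPaper

/-- The windmill graph `W(η,μ)`: `η` copies of `K_μ` glued at a common vertex. -/
def windmill (η μ : ℕ) : SimpleGraph (Unit ⊕ Fin η × Fin (μ-1)) :=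
  SimpleGraph.fromRel fun u v => match u, v with
    | .inl _, .inr _ => True
    | .inr p, .inr q => p.1 = q.1
    | _, _ => False

open Finset Matrix Polynomial

lemma charpoly_diag {n : Type*} [Fintype n] [DecidableEq n] (d : n → ℝ) :
    (Matrix.diagonal d).charpoly = ∏ i : n, (X - C (d i)) := by
  have : charmatrix (Matrix.diagonal d) = Matrix.diagonal (fun i => X - C (d i)) := by
    ext i j
    by_cases h : i = j
    · subst h; simp [charmatrix_apply_eq]
    · simp [charmatrix_apply_ne _ _ _ h, Matrix.diagonal_apply_ne _ h]
  rw [Matrix.charpoly, this, Matrix.det_diagonal]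

lemma charpoly_eq_of_conj {n : Type*} [Fintype n] [DecidableEq n]
    (M P : Matrix n n ℝ) (d : n → ℝ) (hP : IsUnit P.det)
    (h : M * P = P * Matrix.diagonal d) :
    M.charpoly = ∏ i : n, (X - C (d i)) := by
  have key : M.charpoly = (Matrix.diagonal d).charpoly := by
    have h1 : charmatrix M * P.map C = P.map C * charmatrix (Matrix.diagonal d) := by
      simp only [charmatrix, RingHom.mapMatrix_apply]
      rw [sub_mul, mul_sub]
      congr 1
      · exact Matrix.scalar_commute (X : ℝ[X]) (fun r => Commute.all X r) (P.map C)
      · rw [← Matrix.map_mul, ← Matrix.map_mul, h]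
    have h2 := congrArg Matrix.det h1
    rw [Matrix.det_mul, Matrix.det_mul] at h2
    have hd : (P.map C).det ≠ 0 := by
      rw [show P.map (⇑C) = (C : ℝ →+* ℝ[X]).mapMatrix P from rfl, ← RingHom.map_det]
      simpa using hP.ne_zero
    unfold Matrix.charpoly
    rw [mul_comm ((P.map C).det)] at h2
    exact mul_right_cancel₀ hd h2
  rw [key, charpoly_diag]

def uvec {n : ℕ} (i j : Fin n) : ℝ := if j < i then 1 else if j = i then -(i:ℝ) else 0

lemma sum_lt_one {n : ℕ} (i : Fin n) : ∑ j : Fin n, (if j < i then (1:ℝ) else 0) = i := by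
  rw [Finset.sum_boole]
  norm_cast
  rw [show Finset.filter (fun j => j < i) Finset.univ = Finset.Iio i by ext j; simp]
  simp

lemma sum_uvec {n : ℕ} (i : Fin n) : ∑ j, uvec i j = 0 := by
  have : ∀ j : Fin n, uvec i j = (if j < i then (1:ℝ) else 0) + (if j = i then -(i:ℝ) else 0) := by
    intro j
    unfold uvec
    rcases lt_trichotomy j i with h | h | h
    · simp [h, ne_of_lt h]
    · simp [h]
    · simp [not_lt.2 h.le, h.ne']
  rw [Finset.sum_congr rfl fun j _ => this j, Finset.sum_add_distrib, sum_lt_one,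
    Finset.sum_ite_eq' Finset.univ i (fun _ => -(i:ℝ))]
  simp

lemma sum_uvec_sq {n : ℕ} (i : Fin n) : ∑ j, uvec i j * uvec i j = (i:ℝ) + (i:ℝ)^2 := by
  have : ∀ j : Fin n, uvec i j * uvec i j
      = (if j < i then (1:ℝ) else 0) + (if j = i then (i:ℝ)^2 else 0) := by
    intro j
    unfold uvec
    rcases lt_trichotomy j i with h | h | h
    · simp [h, ne_of_lt h]
    · simp [h]; ring
    · simp [not_lt.2 h.le, h.ne']
  rw [Finset.sum_congr rfl fun j _ => this j, Finset.sum_add_distrib, sum_lt_one,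
    Finset.sum_ite_eq' Finset.univ i (fun _ => (i:ℝ)^2)]
  simp

lemma sum_uvec_mul {n : ℕ} {i i' : Fin n} (h : i ≠ i') :
    ∑ j, uvec i j * uvec i' j = 0 := by
  wlog hlt : i < i' generalizing i i'
  · rw [Finset.sum_congr rfl fun j _ => mul_comm _ _]
    exact this h.symm ((h.lt_or_gt).resolve_left hlt)
  have : ∀ j : Fin n, uvec i j * uvec i' j = uvec i j := by
    intro j
    rcases lt_trichotomy j i with hj | hj | hj
    · have : uvec i' j = 1 := by unfold uvec; simp [hj.trans hlt]
      rw [this, mul_one]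
    · have : uvec i' j = 1 := by unfold uvec; simp [hj ▸ hlt]
      rw [this, mul_one]
    · have : uvec i j = 0 := by unfold uvec; simp [not_lt.2 hj.le, hj.ne']
      rw [this, zero_mul]
  rw [Finset.sum_congr rfl fun j _ => this j, sum_uvec]

variable {η m : ℕ}

lemma adj_inl_inr (p : Fin η × Fin m) : (windmill η (m+1)).Adj (.inl ()) (.inr p) := by
  rw [windmill, SimpleGraph.fromRel_adj]; exact ⟨by simp, Or.inl trivial⟩
lemma adj_inr_inl (p : Fin η × Fin m) : (windmill η (m+1)).Adj (.inr p) (.inl ()) := by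
  rw [windmill, SimpleGraph.fromRel_adj]; exact ⟨by simp, Or.inr trivial⟩
lemma adj_inr_inr (p q : Fin η × Fin m) :
    (windmill η (m+1)).Adj (.inr p) (.inr q) ↔ p.1 = q.1 ∧ p ≠ q := by
  rw [windmill, SimpleGraph.fromRel_adj]
  constructor
  · rintro ⟨hne, h | h⟩
    · exact ⟨h, by simpa using hne⟩
    · exact ⟨h.symm, by simpa using hne⟩
  · rintro ⟨h1, h2⟩
    exact ⟨by simpa using h2, Or.inl h1⟩

lemma nsum_inl (f : Unit ⊕ Fin η × Fin m → ℝ) :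
    ∑ u ∈ (windmill η (m+1)).neighborFinset (.inl ()), f u
      = ∑ j : Fin η, ∑ s : Fin m, f (.inr (j, s)) := by
  rw [SimpleGraph.neighborFinset_eq_filter, Finset.sum_filter, Fintype.sum_sum_type,
    Fintype.sum_prod_type]
  have h1 : (∑ x : Unit, if (windmill η (m+1)).Adj (.inl ()) (.inl x) then f (.inl x) else 0)
      = 0 := by simp
  rw [h1, zero_add]
  exact Finset.sum_congr rfl fun j _ => Finset.sum_congr rfl fun s _ =>
    if_pos (adj_inl_inr (j, s))

lemma nsum_inr (p : Fin η × Fin m) (f : Unit ⊕ Fin η × Fin m → ℝ) :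
    ∑ u ∈ (windmill η (m+1)).neighborFinset (.inr p), f u
      = f (.inl ()) + ((∑ s : Fin m, f (.inr (p.1, s))) - f (.inr p)) := by
  rw [SimpleGraph.neighborFinset_eq_filter, Finset.sum_filter, Fintype.sum_sum_type,
    Fintype.sum_prod_type]
  have h1 : (∑ x : Unit, if (windmill η (m+1)).Adj (.inr p) (.inl x) then f (.inl x) else 0)
      = f (.inl ()) := by simp [if_pos (adj_inr_inl p)]
  rw [h1]
  congr 1
  have key : ∀ (j : Fin η) (s : Fin m),
      (if (windmill η (m+1)).Adj (.inr p) (.inr (j, s)) then f (.inr (j, s)) else 0)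
        = if j = p.1 then (if s = p.2 then 0 else f (.inr (j, s))) else 0 := by
    intro j s
    by_cases h1 : j = p.1
    · by_cases h2 : s = p.2
      · rw [if_pos h1, if_pos h2, if_neg]
        rw [adj_inr_inr]
        rintro ⟨-, hne⟩
        exact hne (Prod.ext_iff.2 ⟨h1.symm, h2.symm⟩)
      · rw [if_pos h1, if_neg h2, if_pos]
        rw [adj_inr_inr]
        exact ⟨h1.symm, fun hp => h2 (congrArg Prod.snd hp).symm⟩
    · rw [if_neg h1, if_neg]
      rw [adj_inr_inr]
      rintro ⟨hp, -⟩
      exact h1 hp.symm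
  have key2 : ∀ j : Fin η,
      (∑ s : Fin m, if j = p.1 then (if s = p.2 then 0 else f (.inr (j, s))) else 0)
        = if j = p.1 then (∑ s : Fin m, if s = p.2 then 0 else f (.inr (j, s))) else 0 := by
    intro j; split <;> simp
  calc (∑ j : Fin η, ∑ s : Fin m,
        if (windmill η (m+1)).Adj (.inr p) (.inr (j, s)) then f (.inr (j, s)) else 0)
      = ∑ j : Fin η, if j = p.1 then (∑ s : Fin m, if s = p.2 then 0
          else f (.inr (j, s))) else 0 := by
        refine Finset.sum_congr rfl fun j _ => ?_
        rw [← key2]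
        exact Finset.sum_congr rfl fun s _ => key j s
    _ = ∑ s : Fin m, (if s = p.2 then 0 else f (.inr (p.1, s))) := by
        rw [Finset.sum_ite_eq' Finset.univ p.1]; simp
    _ = (∑ s : Fin m, f (.inr (p.1, s))) - f (.inr p) := by
        have : ∀ s : Fin m, (if s = p.2 then 0 else f (.inr (p.1, s)))
            = f (.inr (p.1, s)) - (if s = p.2 then f (.inr p) else 0) := by
          intro s
          by_cases h : s = p.2
          · subst h; simp
          · simp [h]
        simp only [this, Finset.sum_sub_distrib]
        rw [Finset.sum_ite_eq' Finset.univ p.2 (fun _ => f (.inr p))]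
        simp

lemma deg_inl : ((windmill η (m+1)).degree (.inl ()) : ℝ) = η * m := by
  rw [SimpleGraph.degree_eq_sum_if_adj, ← Finset.sum_filter,
    ← SimpleGraph.neighborFinset_eq_filter, nsum_inl (fun _ => (1:ℝ))]
  simp [mul_comm]

lemma deg_inr (p : Fin η × Fin m) :
    ((windmill η (m+1)).degree (.inr p) : ℝ) = m := by
  rw [SimpleGraph.degree_eq_sum_if_adj, ← Finset.sum_filter,
    ← SimpleGraph.neighborFinset_eq_filter, nsum_inr p (fun _ => (1:ℝ))]
  simp


def col0 (η m : ℕ) : Unit ⊕ Fin η × Fin m → ℝ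
  | .inl _ => (η : ℝ) * m
  | .inr _ => -1

def col1 {η : ℕ} (m : ℕ) (i : Fin η) : Unit ⊕ Fin η × Fin m → ℝ
  | .inl _ => 0
  | .inr (j, _) => uvec i j

def col2 {η m : ℕ} (i : Fin η) (t : Fin m) : Unit ⊕ Fin η × Fin m → ℝ
  | .inl _ => 0
  | .inr (j, s) => if j = i then uvec t s else 0

lemma eig_col0 : (windmill η (m+1)).lapMatrix ℝ *ᵥ col0 η m
    = fun x => ((η:ℝ) * m + 1) * col0 η m x := by
  funext (x : Unit ⊕ Fin η × Fin m)
  rw [SimpleGraph.lapMatrix_mulVec_apply]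
  cases x with
  | inl u =>
    rw [nsum_inl (col0 η m), deg_inl]
    simp only [col0, Finset.sum_const, Finset.card_univ, Fintype.card_fin, nsmul_eq_mul]
    push_cast; ring
  | inr p =>
    rw [nsum_inr p (col0 η m), deg_inr]
    simp only [col0, Finset.sum_const, Finset.card_univ, Fintype.card_fin, nsmul_eq_mul]
    push_cast; ring

lemma eig_col1 (i : Fin η) : (windmill η (m+1)).lapMatrix ℝ *ᵥ col1 m i
    = fun x => 1 * col1 m i x := by
  funext (x : Unit ⊕ Fin η × Fin m)
  rw [SimpleGraph.lapMatrix_mulVec_apply]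
  cases x with
  | inl u =>
    rw [nsum_inl (col1 m i), deg_inl]
    simp only [col1, Finset.sum_const, Finset.card_univ, Fintype.card_fin, nsmul_eq_mul]
    rw [← Finset.mul_sum, sum_uvec]
    simp
  | inr p =>
    rw [nsum_inr p (col1 m i), deg_inr]
    simp only [col1, Finset.sum_const, Finset.card_univ, Fintype.card_fin, nsmul_eq_mul]
    ring

lemma eig_col2 (i : Fin η) (t : Fin m) : (windmill η (m+1)).lapMatrix ℝ *ᵥ col2 i t
    = fun x => ((m:ℝ) + 1) * col2 i t x := by
  funext (x : Unit ⊕ Fin η × Fin m)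
  rw [SimpleGraph.lapMatrix_mulVec_apply]
  cases x with
  | inl u =>
    rw [nsum_inl (col2 i t), deg_inl]
    have h1 : ∀ j : Fin η, (∑ s : Fin m, (if j = i then uvec t s else 0))
        = if j = i then 0 else 0 := by
      intro j
      split
      · exact sum_uvec t
      · simp
    simp only [col2, h1]
    simp
  | inr p =>
    rw [nsum_inr p (col2 i t), deg_inr]
    have h1 : (∑ s : Fin m, (if p.1 = i then uvec t s else 0)) = 0 := by
      split
      · exact sum_uvec t
      · simp
    simp only [col2, h1]
    ring


def colOf (η m : ℕ) : Unit ⊕ Fin η × Fin m → (Unit ⊕ Fin η × Fin m → ℝ)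
  | .inl _ => fun _ => 1
  | .inr (i, t) => if (t:ℕ) = 0 then (if (i:ℕ) = 0 then col0 η m else col1 m i) else col2 i t

def Pmat (η m : ℕ) : Matrix (Unit ⊕ Fin η × Fin m) (Unit ⊕ Fin η × Fin m) ℝ :=
  Matrix.of fun x c => colOf η m c x

def dvec (η m : ℕ) : Unit ⊕ Fin η × Fin m → ℝ
  | .inl _ => 0
  | .inr (i, t) => if (t:ℕ) = 0 then (if (i:ℕ) = 0 then (η:ℝ)*m+1 else 1) else (m:ℝ)+1

lemma eig_all (c : Unit ⊕ Fin η × Fin m) :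
    (windmill η (m+1)).lapMatrix ℝ *ᵥ colOf η m c = fun x => dvec η m c * colOf η m c x := by
  cases c with
  | inl u =>
    have hc : colOf η m (Sum.inl u) = fun _ => (1:ℝ) := rfl
    have h0 : (windmill η (m+1)).lapMatrix ℝ *ᵥ (fun _ : Unit ⊕ Fin η × Fin m => (1:ℝ)) = 0 :=
      SimpleGraph.lapMatrix_mulVec_const_eq_zero _
    rw [hc, h0]
    funext x
    simp [dvec]
  | inr p =>
    obtain ⟨i, t⟩ := p
    have hc : colOf η m (Sum.inr (i, t))
        = if (t:ℕ) = 0 then (if (i:ℕ) = 0 then col0 η m else col1 m i) else col2 i t := rfl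
    by_cases ht : (t:ℕ) = 0
    · by_cases hi : (i:ℕ) = 0
      · rw [hc, if_pos ht, if_pos hi, eig_col0]
        funext x
        simp [dvec, colOf, ht, hi]
      · rw [hc, if_pos ht, if_neg hi, eig_col1]
        funext x
        simp [dvec, colOf, ht, hi]
    · rw [hc, if_neg ht, eig_col2]
      funext x
      simp [dvec, colOf, ht]

def Lmat (η m : ℕ) : Matrix (Unit ⊕ Fin η × Fin m) (Unit ⊕ Fin η × Fin m) ℝ :=
  (windmill η (m+1)).lapMatrix ℝ

lemma LP_eq : Lmat η m * Pmat η m = Pmat η m * Matrix.diagonal (dvec η m) := by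
  ext x c
  rw [Matrix.mul_apply, Matrix.mul_diagonal]
  have h := congrFun (eig_all (η := η) (m := m) c) x
  simp only [Matrix.mulVec, dotProduct] at h
  show (∑ y, (windmill η (m+1)).lapMatrix ℝ x y * colOf η m c y) = colOf η m c x * dvec η m c
  rw [h, mul_comm]

def gvec (η m : ℕ) : Unit ⊕ Fin η × Fin m → ℝ
  | .inl _ => (η:ℝ)*m+1
  | .inr (i, t) =>
      if (t:ℕ) = 0 then (if (i:ℕ) = 0 then ((η:ℝ)*m)^2+(η:ℝ)*m else (m:ℝ)*((i:ℝ)+(i:ℝ)^2))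
      else (t:ℝ)+(t:ℝ)^2

lemma dot_split (f g : Unit ⊕ Fin η × Fin m → ℝ) :
    ∑ x : Unit ⊕ Fin η × Fin m, f x * g x
      = f (.inl ()) * g (.inl ())
        + ∑ j : Fin η, ∑ s : Fin m, f (.inr (j, s)) * g (.inr (j, s)) := by
  rw [Fintype.sum_sum_type, Fintype.sum_prod_type]
  simp

lemma dot_one_col1 (i : Fin η) :
    ∑ x : Unit ⊕ Fin η × Fin m, (1:ℝ) * col1 m i x = 0 := by
  rw [dot_split]
  simp only [col1, one_mul, Finset.sum_const, Finset.card_univ, Fintype.card_fin, nsmul_eq_mul]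
  rw [← Finset.mul_sum, sum_uvec]
  simp

lemma dot_one_col2 (i : Fin η) (t : Fin m) :
    ∑ x : Unit ⊕ Fin η × Fin m, (1:ℝ) * col2 i t x = 0 := by
  rw [dot_split]
  have h1 : ∀ j : Fin η, (∑ s : Fin m, (if j = i then uvec t s else 0))
      = 0 := by
    intro j; split
    · exact sum_uvec t
    · simp
  simp only [col2, one_mul, h1]
  simp

lemma dot_col0_col1 (i : Fin η) :
    ∑ x : Unit ⊕ Fin η × Fin m, col0 η m x * col1 m i x = 0 := by
  rw [dot_split]
  simp only [col0, col1, mul_zero, neg_one_mul, zero_add, Finset.sum_neg_distrib]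
  simp only [Finset.sum_const, Finset.card_univ, Fintype.card_fin, nsmul_eq_mul]
  rw [← Finset.mul_sum, sum_uvec]
  simp

lemma dot_col0_col2 (i : Fin η) (t : Fin m) :
    ∑ x : Unit ⊕ Fin η × Fin m, col0 η m x * col2 i t x = 0 := by
  rw [dot_split]
  have h1 : ∀ j : Fin η, (∑ s : Fin m, (-1:ℝ) * (if j = i then uvec t s else 0)) = 0 := by
    intro j
    rw [← Finset.mul_sum]
    rcases eq_or_ne j i with h | h
    · simp only [h, if_pos]
      rw [sum_uvec, mul_zero]
    · simp [h]
  simp only [col0, col2, mul_zero, h1]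
  simp

lemma dot_col1_col2 (i i' : Fin η) (t : Fin m) :
    ∑ x : Unit ⊕ Fin η × Fin m, col1 m i x * col2 i' t x = 0 := by
  rw [dot_split]
  have h1 : ∀ j : Fin η, (∑ s : Fin m, uvec i j * (if j = i' then uvec t s else 0)) = 0 := by
    intro j
    rw [← Finset.mul_sum]
    rcases eq_or_ne j i' with h | h
    · simp only [h, if_pos]
      rw [sum_uvec, mul_zero]
    · simp [h]
  simp only [col1, col2, mul_zero, zero_mul, h1]
  simp

lemma dot_col1_col1 (i i' : Fin η) :
    ∑ x : Unit ⊕ Fin η × Fin m, col1 m i x * col1 m i' x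
      = if i = i' then (m:ℝ) * ((i:ℝ) + (i:ℝ)^2) else 0 := by
  rw [dot_split]
  simp only [col1, mul_zero, zero_add, Finset.sum_const, Finset.card_univ,
    Fintype.card_fin, nsmul_eq_mul]
  rw [← Finset.mul_sum]
  rcases eq_or_ne i i' with h | h
  · subst h
    rw [sum_uvec_sq, if_pos rfl]
  · rw [sum_uvec_mul h, if_neg h, mul_zero]

lemma dot_col2_col2 (i i' : Fin η) (t t' : Fin m) :
    ∑ x : Unit ⊕ Fin η × Fin m, col2 i t x * col2 i' t' x
      = if i = i' then (if t = t' then (t:ℝ) + (t:ℝ)^2 else 0) else 0 := by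
  rw [dot_split]
  have h1 : ∀ j : Fin η, ∀ s : Fin m,
      (if j = i then uvec t s else 0) * (if j = i' then uvec t' s else 0)
        = if j = i then (if i = i' then uvec t s * uvec t' s else 0) else 0 := by
    intro j s
    rcases eq_or_ne j i with h | h
    · subst h
      rcases eq_or_ne j i' with h' | h' <;> simp [h']
    · simp [h]
  simp only [col2, mul_zero, h1]
  have h2 : ∀ j : Fin η, (∑ s : Fin m,
      if j = i then (if i = i' then uvec t s * uvec t' s else 0) else 0)
        = if j = i then (if i = i' then ∑ s : Fin m, uvec t s * uvec t' s else 0) else 0 := by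
    intro j
    split
    · split <;> simp
    · simp
  simp only [h2]
  rw [Finset.sum_ite_eq' Finset.univ i]
  simp only [Finset.mem_univ, if_pos, zero_add]
  rcases eq_or_ne i i' with h | h
  · simp only [h, if_pos rfl]
    rcases eq_or_ne t t' with h' | h'
    · subst h'
      rw [sum_uvec_sq, if_pos rfl]
    · rw [sum_uvec_mul h', if_neg h']
  · simp [h]

lemma dot_one_one : ∑ x : Unit ⊕ Fin η × Fin m, (1:ℝ) * 1 = (η:ℝ)*m+1 := by
  rw [dot_split]
  simp
  ring

lemma dot_one_col0 : ∑ x : Unit ⊕ Fin η × Fin m, (1:ℝ) * col0 η m x = 0 := by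
  rw [dot_split]
  simp [col0]

lemma dot_col0_col0 : ∑ x : Unit ⊕ Fin η × Fin m, col0 η m x * col0 η m x
    = ((η:ℝ)*m)^2 + (η:ℝ)*m := by
  rw [dot_split]
  simp [col0]
  ring

lemma dot_swap (f g : Unit ⊕ Fin η × Fin m → ℝ) :
    ∑ x : Unit ⊕ Fin η × Fin m, f x * g x = ∑ x : Unit ⊕ Fin η × Fin m, g x * f x :=
  Finset.sum_congr rfl fun x _ => mul_comm _ _

lemma inr_eq_iff {i i' : Fin η} {t t' : Fin m} :
    (Sum.inr (i, t) : Unit ⊕ Fin η × Fin m) = Sum.inr (i', t') ↔ i = i' ∧ t = t' := by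
  simp [Prod.ext_iff]

lemma gram_eq : (Pmat η m)ᵀ * Pmat η m = Matrix.diagonal (gvec η m) := by
  ext c c'
  rw [Matrix.mul_apply]
  show (∑ x, colOf η m c x * colOf η m c' x) = Matrix.diagonal (gvec η m) c c'
  cases c with
  | inl u =>
    cases u
    cases c' with
    | inl u' =>
      cases u'
      rw [Matrix.diagonal_apply_eq]
      exact dot_one_one
    | inr p =>
      obtain ⟨i, t⟩ := p
      rw [Matrix.diagonal_apply_ne _ (by simp : (Sum.inl () : Unit ⊕ Fin η × Fin m) ≠ _)]
      show (∑ x, (1:ℝ) * colOf η m (Sum.inr (i,t)) x) = 0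
      have hc : colOf η m (Sum.inr (i, t))
          = if (t:ℕ) = 0 then (if (i:ℕ) = 0 then col0 η m else col1 m i) else col2 i t := rfl
      by_cases ht : (t:ℕ) = 0
      · by_cases hi : (i:ℕ) = 0
        · rw [hc, if_pos ht, if_pos hi]; exact dot_one_col0
        · rw [hc, if_pos ht, if_neg hi]; exact dot_one_col1 i
      · rw [hc, if_neg ht]; exact dot_one_col2 i t
  | inr p =>
    obtain ⟨i, t⟩ := p
    have hc : colOf η m (Sum.inr (i, t))
        = if (t:ℕ) = 0 then (if (i:ℕ) = 0 then col0 η m else col1 m i) else col2 i t := rfl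
    cases c' with
    | inl u' =>
      cases u'
      rw [Matrix.diagonal_apply_ne _ (by simp : (Sum.inr (i,t) : Unit ⊕ Fin η × Fin m) ≠ _)]
      show (∑ x, colOf η m (Sum.inr (i,t)) x * (1:ℝ)) = 0
      rw [dot_swap]
      by_cases ht : (t:ℕ) = 0
      · by_cases hi : (i:ℕ) = 0
        · rw [hc, if_pos ht, if_pos hi]; exact dot_one_col0
        · rw [hc, if_pos ht, if_neg hi]; exact dot_one_col1 i
      · rw [hc, if_neg ht]; exact dot_one_col2 i t
    | inr p' =>
      obtain ⟨i', t'⟩ := p'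
      have hc' : colOf η m (Sum.inr (i', t'))
          = if (t':ℕ) = 0 then (if (i':ℕ) = 0 then col0 η m else col1 m i') else col2 i' t' := rfl
      have hgv : gvec η m (Sum.inr (i, t))
          = if (t:ℕ) = 0 then (if (i:ℕ) = 0 then ((η:ℝ)*m)^2+(η:ℝ)*m
              else (m:ℝ)*((i:ℝ)+(i:ℝ)^2)) else (t:ℝ)+(t:ℝ)^2 := rfl
      by_cases ht : (t:ℕ) = 0 <;> by_cases ht' : (t':ℕ) = 0
      · -- both t = 0
        have htt' : t = t' := Fin.ext (ht.trans ht'.symm)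
        by_cases hi : (i:ℕ) = 0 <;> by_cases hi' : (i':ℕ) = 0
        · have hii' : i = i' := Fin.ext (hi.trans hi'.symm)
          subst hii'; subst htt'
          rw [Matrix.diagonal_apply_eq, hc, if_pos ht, if_pos hi, hgv, if_pos ht, if_pos hi]
          exact dot_col0_col0
        · rw [hc, if_pos ht, if_pos hi, hc', if_pos ht', if_neg hi',
            Matrix.diagonal_apply_ne _ (by
              rw [ne_eq, inr_eq_iff]
              rintro ⟨rfl, -⟩
              exact hi' hi)]
          exact dot_col0_col1 i'
        · rw [hc, if_pos ht, if_neg hi, hc', if_pos ht', if_pos hi',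
            Matrix.diagonal_apply_ne _ (by
              rw [ne_eq, inr_eq_iff]
              rintro ⟨rfl, -⟩
              exact hi hi')]
          rw [dot_swap]
          exact dot_col0_col1 i
        · rw [hc, if_pos ht, if_neg hi, hc', if_pos ht', if_neg hi']
          rw [dot_col1_col1]
          rcases eq_or_ne i i' with h | h
          · subst h; subst htt'
            rw [Matrix.diagonal_apply_eq, hgv, if_pos ht, if_neg hi, if_pos rfl]
          · rw [if_neg h, Matrix.diagonal_apply_ne _ (by
              rw [ne_eq, inr_eq_iff]
              rintro ⟨rfl, -⟩
              exact h rfl)]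
      · -- t = 0, t' ≠ 0
        have hne : (Sum.inr (i,t) : Unit ⊕ Fin η × Fin m) ≠ Sum.inr (i', t') := by
          rw [ne_eq, inr_eq_iff]
          rintro ⟨-, rfl⟩
          exact ht' ht
        rw [Matrix.diagonal_apply_ne _ hne, hc', if_neg ht']
        by_cases hi : (i:ℕ) = 0
        · rw [hc, if_pos ht, if_pos hi]; exact dot_col0_col2 i' t'
        · rw [hc, if_pos ht, if_neg hi]; exact dot_col1_col2 i i' t'
      · -- t ≠ 0, t' = 0
        have hne : (Sum.inr (i,t) : Unit ⊕ Fin η × Fin m) ≠ Sum.inr (i', t') := by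
          rw [ne_eq, inr_eq_iff]
          rintro ⟨-, rfl⟩
          exact ht ht'
        rw [Matrix.diagonal_apply_ne _ hne, hc, if_neg ht, dot_swap]
        by_cases hi' : (i':ℕ) = 0
        · rw [hc', if_pos ht', if_pos hi']; exact dot_col0_col2 i t
        · rw [hc', if_pos ht', if_neg hi']; exact dot_col1_col2 i' i t
      · -- both nonzero
        rw [hc, if_neg ht, hc', if_neg ht', dot_col2_col2]
        rcases eq_or_ne i i' with h | h
        · rcases eq_or_ne t t' with h2 | h2
          · subst h; subst h2
            rw [if_pos rfl, if_pos rfl, Matrix.diagonal_apply_eq, hgv, if_neg ht]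
          · rw [if_pos h, if_neg h2, Matrix.diagonal_apply_ne _ (by
              rw [ne_eq, inr_eq_iff]
              rintro ⟨-, rfl⟩
              exact h2 rfl)]
        · rw [if_neg h, Matrix.diagonal_apply_ne _ (by
            rw [ne_eq, inr_eq_iff]
            rintro ⟨rfl, -⟩
            exact h rfl)]


lemma det_unit (hη : 2 ≤ η) (hm : 1 ≤ m) : IsUnit (Pmat η m).det := by
  have h := congrArg Matrix.det (gram_eq (η := η) (m := m))
  rw [Matrix.det_mul, Matrix.det_transpose, Matrix.det_diagonal] at h
  have hη' : (2:ℝ) ≤ (η:ℝ) := by exact_mod_cast hη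
  have hm' : (1:ℝ) ≤ (m:ℝ) := by exact_mod_cast hm
  have hprod : ∏ c : Unit ⊕ Fin η × Fin m, gvec η m c ≠ 0 := by
    rw [Finset.prod_ne_zero_iff]
    intro c _
    cases c with
    | inl u => show (η:ℝ)*m+1 ≠ 0; positivity
    | inr p =>
      obtain ⟨i, t⟩ := p
      show (if (t:ℕ) = 0 then _ else _) ≠ 0
      by_cases ht : (t:ℕ) = 0
      · rw [if_pos ht]
        by_cases hi : (i:ℕ) = 0
        · rw [if_pos hi]
          nlinarith
        · rw [if_neg hi]
          have : (1:ℝ) ≤ (i:ℝ) := by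
            have : 1 ≤ (i:ℕ) := Nat.one_le_iff_ne_zero.2 hi
            exact_mod_cast this
          nlinarith
      · rw [if_neg ht]
        have : (1:ℝ) ≤ (t:ℝ) := by
          have : 1 ≤ (t:ℕ) := Nat.one_le_iff_ne_zero.2 ht
          exact_mod_cast this
        nlinarith
  rw [← h] at hprod
  rw [isUnit_iff_ne_zero]
  intro h0
  rw [h0, mul_zero] at hprod
  exact hprod rfl

lemma prod_dvec (hη : 2 ≤ η) (hm : 1 ≤ m) :
    ∏ x : Unit ⊕ Fin η × Fin m, (X - C (dvec η m x))
      = (X - C 0) * ((X - C ((η:ℝ)*m+1))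
          * ((X - C 1)^(η-1) * (X - C ((m:ℝ)+1))^(η*(m-1)))) := by
  haveI : NeZero m := ⟨by omega⟩
  haveI : NeZero η := ⟨by omega⟩
  rw [Fintype.prod_sum_type, Fintype.prod_prod_type]
  have hunit : (∏ x : Unit, (X - C (dvec η m (Sum.inl x)))) = X - C 0 := by
    simp [dvec]
  rw [hunit]
  congr 1
  have hrow : ∀ i : Fin η, (∏ t : Fin m, (X - C (dvec η m (Sum.inr (i, t)))))
      = (X - C (if (i:ℕ) = 0 then (η:ℝ)*m+1 else 1)) * (X - C ((m:ℝ)+1))^(m-1) := by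
    intro i
    rw [← Finset.mul_prod_erase Finset.univ _ (Finset.mem_univ (0 : Fin m))]
    have e1 : dvec η m (Sum.inr (i, (0 : Fin m)))
        = if (i:ℕ) = 0 then (η:ℝ)*m+1 else 1 := by
      have : dvec η m (Sum.inr (i, (0 : Fin m)))
          = if ((0 : Fin m):ℕ) = 0 then (if (i:ℕ) = 0 then (η:ℝ)*m+1 else 1) else (m:ℝ)+1 := rfl
      rw [this, if_pos (Fin.val_zero m)]
    have e2 : (∏ t ∈ Finset.univ.erase (0 : Fin m), (X - C (dvec η m (Sum.inr (i, t)))))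
        = (X - C ((m:ℝ)+1))^(m-1) := by
      rw [Finset.prod_congr rfl (fun t ht => ?_), Finset.prod_const,
        Finset.card_erase_of_mem (Finset.mem_univ _), Finset.card_univ, Fintype.card_fin]
      have ht0 : (t:ℕ) ≠ 0 := by
        intro hv
        exact (Finset.mem_erase.1 ht).1 (Fin.ext hv)
      have : dvec η m (Sum.inr (i, t))
          = if (t:ℕ) = 0 then (if (i:ℕ) = 0 then (η:ℝ)*m+1 else 1) else (m:ℝ)+1 := rfl
      rw [this, if_neg ht0]
    rw [e1, e2]
  rw [Finset.prod_congr rfl (fun i _ => hrow i),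
    ← Finset.mul_prod_erase Finset.univ _ (Finset.mem_univ (0 : Fin η))]
  have e3 : ((if ((0:Fin η):ℕ) = 0 then (η:ℝ)*m+1 else 1)) = (η:ℝ)*m+1 :=
    if_pos (Fin.val_zero η)
  have e4 : (∏ i ∈ Finset.univ.erase (0 : Fin η),
        ((X - C (if (i:ℕ) = 0 then (η:ℝ)*m+1 else 1)) * (X - C ((m:ℝ)+1))^(m-1)))
      = ((X - C (1:ℝ)) * (X - C ((m:ℝ)+1))^(m-1))^(η-1) := by
    rw [Finset.prod_congr rfl (fun i hi => ?_), Finset.prod_const,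
      Finset.card_erase_of_mem (Finset.mem_univ _), Finset.card_univ, Fintype.card_fin]
    have hi0 : (i:ℕ) ≠ 0 := by
      intro hv
      exact (Finset.mem_erase.1 hi).1 (Fin.ext hv)
    rw [if_neg hi0]
  rw [e3, e4, mul_pow, ← pow_mul]
  have h2 : η * (m-1) = (m-1) + (m-1)*(η-1) := by
    have h3 : (m-1) + (m-1)*(η-1) = (1 + (η-1)) * (m-1) := by ring
    have h4 : 1 + (η-1) = η := by omega
    rw [h3, h4]
  rw [h2]
  ring

lemma lap_congr {V : Type*} [Fintype V] (G : SimpleGraph V)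
    (d1 d2 : DecidableRel G.Adj) (e1 e2 : DecidableEq V) :
    @SimpleGraph.lapMatrix V ℝ _ G d1 e1 _ = @SimpleGraph.lapMatrix V ℝ _ G d2 e2 _ := by
  have h1 : d1 = d2 := Subsingleton.elim _ _
  have h2 : e1 = e2 := Subsingleton.elim _ _
  rw [h1, h2]


set_option maxHeartbeats 2000000 in
/-- the Laplacian spectrum of the windmill graph `W(η,μ)`. -/
theorem lapSpec_windmill (η μ : ℕ) (hη : 2 ≤ η) (hμ : 3 ≤ μ) :
    lapSpec (windmill η μ) =
      (0 : ℝ) ::ₘ ((η:ℝ)*(μ:ℝ) - (η:ℝ) + 1) ::ₘ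
        (Multiset.replicate (η-1) (1:ℝ) + Multiset.replicate (η*(μ-2)) (μ:ℝ)) := by
  obtain ⟨m, rfl⟩ : ∃ m, μ = m + 1 := ⟨μ - 1, by omega⟩
  have hm : 1 ≤ m := by omega
  have hspec : lapSpec (windmill η (m+1)) = spec (Lmat η m) := by
    unfold lapSpec
    congr!
    exact lap_congr (windmill η (m+1)) _ _ _ _
  rw [hspec]
  unfold spec
  rw [charpoly_eq_of_conj (Lmat η m) (Pmat η m) (dvec η m) (det_unit hη hm) LP_eq,
    prod_dvec hη hm]
  conv_rhs => rw [← roots_multiset_prod_X_sub_C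
    ((0 : ℝ) ::ₘ ((η:ℝ)*((m+1:ℕ):ℝ) - (η:ℝ) + 1) ::ₘ
      (Multiset.replicate (η-1) (1:ℝ) + Multiset.replicate (η*(m+1-2)) ((m+1:ℕ):ℝ)))]
  congr 1
  rw [Multiset.map_cons, Multiset.map_cons, Multiset.map_add, Multiset.map_replicate,
    Multiset.map_replicate, Multiset.prod_cons, Multiset.prod_cons, Multiset.prod_add,
    Multiset.prod_replicate, Multiset.prod_replicate]
  have hc1 : ((η:ℝ)*((m+1:ℕ):ℝ) - (η:ℝ) + 1) = (η:ℝ)*m+1 := by push_cast; ring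
  have hc2 : ((m+1:ℕ):ℝ) = (m:ℝ)+1 := by push_cast; ring
  have hc0 : m+1-2 = m-1 := by omega
  have hc3 : η*(m+1-2) = η*(m-1) := by rw [hc0]
  rw [hc1, hc2, hc3]

end ArxivPaper
end
end
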